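/- Let (H, ·, ∘) be a cocommutative Hopf brace with ⇀ defined by a⇀x := S(a₍₁₎)·(a₍₂₎∘x). Define a↼x := T(a₍₁₎⇀x₍₁₎)∘a₍₂₎∘x₍₂₎, where T is the antipode of (H, ∘). Then ↼ is a right action of the Hopf algebra (H, ∘) on H: (a↼x)↼y = a↼(x∘y) and a↼1 = a; moreover ↼ is a coalgebra map: Δ(a↼x) = (a₍₁₎↼x₍₁₎)⊗(a₍₂₎↼x₍₂₎). -/

import Mathlib

open scoped TensorProduct
open Coalgebra

variable (R H : Type*) [CommRing R] [AddCommGroup H] [Module R H] [Coalgebra R H]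

/-- A Hopf algebra structure (multiplication, unit, antipode) on the coalgebra `H`:
the multiplication is associative with unit, comultiplication and counit are algebra
maps, and `S` is an antipode (expressed via arbitrary Sweedler representations). -/
structure HopfMul where
  mul : H →ₗ[R] H →ₗ[R] H
  one : H
  S : H →ₗ[R] H
  mul_assoc : ∀ a b c : H, mul (mul a b) c = mul a (mul b c)
  one_mul : ∀ a : H, mul one a = a
  mul_one : ∀ a : H, mul a one = a
  comul_mul : ∀ (a b : H) {ι κ : Type*} (ra : Coalgebra.Repr R a ι) (rb : Coalgebra.Repr R b κ),
    comul (R := R) (mul a b) = ∑ i ∈ ra.index, ∑ j ∈ rb.index,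
      mul (ra.left i) (rb.left j) ⊗ₜ[R] mul (ra.right i) (rb.right j)
  comul_one : comul (R := R) one = one ⊗ₜ[R] one
  counit_mul : ∀ a b : H, counit (R := R) (mul a b) = counit (R := R) a * counit (R := R) b
  counit_one : counit (R := R) one = 1
  S_mul_left : ∀ (a : H) {ι : Type*} (r : Coalgebra.Repr R a ι),
    ∑ i ∈ r.index, mul (S (r.left i)) (r.right i) = counit (R := R) a • one
  S_mul_right : ∀ (a : H) {ι : Type*} (r : Coalgebra.Repr R a ι),
    ∑ i ∈ r.index, mul (r.left i) (S (r.right i)) = counit (R := R) a • one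

universe d₁ d₂ d₃ d₄ c₁ c₂ c₃ c₄

/-- A Hopf brace: two Hopf algebra structures `dot` (written `·`) and `circ` (written `∘`)
on the same coalgebra `H`, satisfying `g∘(h·ℓ) = (g₍₁₎∘h)·S(g₍₂₎)·(g₍₃₎∘ℓ)`. -/
structure HopfBrace where
  dot : HopfMul.{_, _, d₁, d₂, d₃, d₄} R H
  circ : HopfMul.{_, _, c₁, c₂, c₃, c₄} R H
  compat : ∀ (g h ℓ : H) {ι : Type*} (r : Coalgebra.Repr R g ι)
      {κ : r.ι → Type*} (r2 : ∀ i : r.ι, Coalgebra.Repr R (r.right i) (κ i)),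
    circ.mul g (dot.mul h ℓ) = ∑ i ∈ r.index, ∑ j ∈ (r2 i).index,
      dot.mul (dot.mul (circ.mul (r.left i) h) (dot.S ((r2 i).left j)))
        (circ.mul ((r2 i).right j) ℓ)

/-- Cocommutativity of the coalgebra `H`. -/
def Cocomm : Prop :=
  ∀ a : H, TensorProduct.comm R H H (comul (R := R) a) = comul (R := R) a

namespace HBaux

open TensorProduct LinearMap

variable {R : Type*} [CommRing R]

/-- Cocommutative coalgebra data (universe polymorphic, unlike Mathlib's tensor instance). -/
structure CoData (R : Type*) (C : Type*) [CommRing R] [AddCommGroup C] [Module R C] where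
  Δ : C →ₗ[R] C ⊗[R] C
  ε : C →ₗ[R] R
  coassoc : (TensorProduct.assoc R C C C).toLinearMap ∘ₗ Δ.rTensor C ∘ₗ Δ = Δ.lTensor C ∘ₗ Δ
  rCounit : ε.rTensor C ∘ₗ Δ = TensorProduct.mk R R C 1
  lCounit : ε.lTensor C ∘ₗ Δ = (TensorProduct.mk R C R).flip 1
  cocomm : (TensorProduct.comm R C C).toLinearMap ∘ₗ Δ = Δ

/-- Associative unital algebra data. -/
structure AlgData (R : Type*) (A : Type*) [CommRing R] [AddCommGroup A] [Module R A] where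
  m : A ⊗[R] A →ₗ[R] A
  e : A
  assoc : ∀ x y z : A, m (m (x ⊗ₜ y) ⊗ₜ z) = m (x ⊗ₜ m (y ⊗ₜ z))
  one_mul : ∀ x : A, m (e ⊗ₜ x) = x
  mul_one : ∀ x : A, m (x ⊗ₜ e) = x

variable {C D A B : Type*}
  [AddCommGroup C] [Module R C] [AddCommGroup D] [Module R D]
  [AddCommGroup A] [Module R A] [AddCommGroup B] [Module R B]

lemma AlgData.massoc (a : AlgData R A) :
    a.m ∘ₗ a.m.rTensor A = a.m ∘ₗ a.m.lTensor A ∘ₗ (TensorProduct.assoc R A A A).toLinearMap :=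
  TensorProduct.ext_threefold fun x y z => by simp [a.assoc]

/-- Convolution product. -/
noncomputable def conv (c : CoData R C) (a : AlgData R A) (f g : C →ₗ[R] A) : C →ₗ[R] A :=
  a.m ∘ₗ TensorProduct.map f g ∘ₗ c.Δ

/-- Convolution unit. -/
noncomputable def cunit (c : CoData R C) (a : AlgData R A) : C →ₗ[R] A :=
  c.ε.smulRight a.e

lemma conv_assoc (c : CoData R C) (a : AlgData R A) (f g h : C →ₗ[R] A) :
    conv c a (conv c a f g) h = conv c a f (conv c a g h) := by
  have e1 : TensorProduct.map (a.m ∘ₗ TensorProduct.map f g ∘ₗ c.Δ) h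
      = a.m.rTensor A ∘ₗ TensorProduct.map (TensorProduct.map f g) h ∘ₗ c.Δ.rTensor C := by
    rw [rTensor, rTensor, ← TensorProduct.map_comp, ← TensorProduct.map_comp]
    simp [LinearMap.comp_assoc]
  have e2 : TensorProduct.map f (a.m ∘ₗ TensorProduct.map g h ∘ₗ c.Δ)
      = a.m.lTensor A ∘ₗ TensorProduct.map f (TensorProduct.map g h) ∘ₗ c.Δ.lTensor C := by
    rw [lTensor, lTensor, ← TensorProduct.map_comp, ← TensorProduct.map_comp]
    simp [LinearMap.comp_assoc]
  apply LinearMap.ext; intro x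
  have h1 := LinearMap.congr_fun e1 (c.Δ x)
  have h2 := LinearMap.congr_fun e2 (c.Δ x)
  have hma := LinearMap.congr_fun a.massoc
    (TensorProduct.map (TensorProduct.map f g) h ((c.Δ.rTensor C) (c.Δ x)))
  have hco := LinearMap.congr_fun c.coassoc x
  have hnat := TensorProduct.map_map_assoc f g h ((c.Δ.rTensor C) (c.Δ x))
  simp only [conv, comp_apply, LinearEquiv.coe_coe] at h1 h2 hma hco hnat ⊢
  rw [h1, h2, hma, ← hnat, hco]

lemma cunit_eq (c : CoData R C) (a : AlgData R A) :
    cunit c a = LinearMap.toSpanSingleton R A a.e ∘ₗ c.ε := by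
  ext x; rfl

lemma conv_cunit_right (c : CoData R C) (a : AlgData R A) (f : C →ₗ[R] A) :
    conv c a f (cunit c a) = f := by
  have e : TensorProduct.map f (cunit c a)
      = TensorProduct.map f (LinearMap.toSpanSingleton R A a.e) ∘ₗ c.ε.lTensor C := by
    rw [cunit_eq, lTensor, ← TensorProduct.map_comp]; simp
  apply LinearMap.ext; intro x
  have h1 := LinearMap.congr_fun e (c.Δ x)
  have h2 := LinearMap.congr_fun c.lCounit x
  simp only [conv, comp_apply] at h1 h2 ⊢
  rw [h1, h2]
  simp [a.mul_one]

lemma conv_cunit_left (c : CoData R C) (a : AlgData R A) (f : C →ₗ[R] A) :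
    conv c a (cunit c a) f = f := by
  have e : TensorProduct.map (cunit c a) f
      = TensorProduct.map (LinearMap.toSpanSingleton R A a.e) f ∘ₗ c.ε.rTensor C := by
    rw [cunit_eq, rTensor, ← TensorProduct.map_comp]; simp
  apply LinearMap.ext; intro x
  have h1 := LinearMap.congr_fun e (c.Δ x)
  have h2 := LinearMap.congr_fun c.rCounit x
  simp only [conv, comp_apply] at h1 h2 ⊢
  rw [h1, h2]
  simp [a.one_mul]

lemma conv_inv_unique (c : CoData R C) (a : AlgData R A) {F P G : C →ₗ[R] A}
    (hF : conv c a F P = cunit c a) (hG : conv c a P G = cunit c a) : F = G := by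
  have : conv c a F (conv c a P G) = conv c a (conv c a F P) G := (conv_assoc c a F P G).symm
  rw [hF, hG, conv_cunit_right, conv_cunit_left] at this
  exact this

lemma conv_cancel_left (c : CoData R C) (a : AlgData R A) {Q P F G : C →ₗ[R] A}
    (hQ : conv c a Q P = cunit c a) (h : conv c a P F = conv c a P G) : F = G := by
  have h2 := congrArg (conv c a Q) h
  rw [← conv_assoc, ← conv_assoc, hQ, conv_cunit_left, conv_cunit_left] at h2
  exact h2

/-- Coalgebra morphism of `CoData`. -/
def IsCM (c : CoData R C) (d : CoData R D) (ψ : C →ₗ[R] D) : Prop :=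
  d.Δ ∘ₗ ψ = TensorProduct.map ψ ψ ∘ₗ c.Δ ∧ d.ε ∘ₗ ψ = c.ε

/-- Algebra morphism of `AlgData`. -/
def IsAM (a : AlgData R A) (b : AlgData R B) (φ : A →ₗ[R] B) : Prop :=
  φ ∘ₗ a.m = b.m ∘ₗ TensorProduct.map φ φ ∧ φ a.e = b.e

lemma conv_precomp (c : CoData R C) (d : CoData R D) (a : AlgData R A)
    {ψ : C →ₗ[R] D} (hψ : IsCM c d ψ) (f g : D →ₗ[R] A) :
    conv d a f g ∘ₗ ψ = conv c a (f ∘ₗ ψ) (g ∘ₗ ψ) := by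
  unfold conv
  rw [LinearMap.comp_assoc, LinearMap.comp_assoc, hψ.1, TensorProduct.map_comp]
  simp [LinearMap.comp_assoc]

lemma cunit_precomp (c : CoData R C) (d : CoData R D) (a : AlgData R A)
    {ψ : C →ₗ[R] D} (hψ : IsCM c d ψ) :
    cunit d a ∘ₗ ψ = cunit c a := by
  rw [cunit_eq, cunit_eq, LinearMap.comp_assoc, hψ.2]

lemma conv_postcomp (c : CoData R C) (a : AlgData R A) (b : AlgData R B)
    {φ : A →ₗ[R] B} (hφ : IsAM a b φ) (f g : C →ₗ[R] A) :
    φ ∘ₗ conv c a f g = conv c b (φ ∘ₗ f) (φ ∘ₗ g) := by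
  unfold conv
  rw [← LinearMap.comp_assoc, ← LinearMap.comp_assoc, hφ.1, TensorProduct.map_comp]
  simp [LinearMap.comp_assoc]

lemma cunit_postcomp (c : CoData R C) (a : AlgData R A) (b : AlgData R B)
    {φ : A →ₗ[R] B} (hφ : IsAM a b φ) :
    φ ∘ₗ cunit c a = cunit c b := by
  ext x
  simp [cunit, hφ.2]

section Rep

/-- A chosen finite representation of `c.Δ x`. -/
noncomputable def CoData.rep (c : CoData R C) (x : C) : Finset (C × C) :=
  (TensorProduct.exists_finset (c.Δ x)).choose

lemma CoData.rep_eq (c : CoData R C) (x : C) :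
    c.Δ x = ∑ p ∈ c.rep x, p.1 ⊗ₜ[R] p.2 :=
  (TensorProduct.exists_finset (c.Δ x)).choose_spec

lemma CoData.sum_ε_smul (c : CoData R C) (x : C) :
    ∑ p ∈ c.rep x, c.ε p.1 • p.2 = x := by
  have h := LinearMap.congr_fun c.rCounit x
  simp only [comp_apply, c.rep_eq x, map_sum, rTensor_tmul, TensorProduct.mk_apply] at h
  have := congrArg (TensorProduct.lid R C) h
  simpa [map_sum] using this

lemma CoData.sum_smul_ε (c : CoData R C) (x : C) :
    ∑ p ∈ c.rep x, c.ε p.2 • p.1 = x := by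
  have h := LinearMap.congr_fun c.lCounit x
  simp only [comp_apply, c.rep_eq x, map_sum, lTensor_tmul, LinearMap.flip_apply,
    TensorProduct.mk_apply] at h
  have := congrArg (TensorProduct.rid R C) h
  simpa [map_sum] using this

lemma CoData.sum_ε_mul (c : CoData R C) (x : C) :
    ∑ p ∈ c.rep x, c.ε p.1 * c.ε p.2 = c.ε x := by
  have := congrArg c.ε (c.sum_ε_smul x)
  simpa [map_sum, smul_eq_mul] using this

lemma CoData.cocomm_rep (c : CoData R C) (x : C) :
    ∑ p ∈ c.rep x, p.2 ⊗ₜ[R] p.1 = c.Δ x := by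
  have h := LinearMap.congr_fun c.cocomm x
  calc ∑ p ∈ c.rep x, p.2 ⊗ₜ[R] p.1
      = TensorProduct.comm R C C (∑ p ∈ c.rep x, p.1 ⊗ₜ[R] p.2) := by simp [map_sum]
    _ = c.Δ x := by rw [← c.rep_eq x]; simpa using h

lemma CoData.coassoc_rep (c : CoData R C) (x : C) :
    ∑ p ∈ c.rep x, ∑ q ∈ c.rep p.1, q.1 ⊗ₜ[R] (q.2 ⊗ₜ[R] p.2)
      = ∑ p ∈ c.rep x, ∑ q ∈ c.rep p.2, p.1 ⊗ₜ[R] (q.1 ⊗ₜ[R] q.2) := by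
  have h := LinearMap.congr_fun c.coassoc x
  simp only [comp_apply, LinearEquiv.coe_coe] at h
  calc ∑ p ∈ c.rep x, ∑ q ∈ c.rep p.1, q.1 ⊗ₜ[R] (q.2 ⊗ₜ[R] p.2)
      = TensorProduct.assoc R C C C ((c.Δ.rTensor C) (c.Δ x)) := by
        rw [c.rep_eq x]
        simp only [map_sum, rTensor_tmul]
        refine Finset.sum_congr rfl fun p _ => ?_
        rw [c.rep_eq p.1]
        simp [TensorProduct.sum_tmul, map_sum]
    _ = (c.Δ.lTensor C) (c.Δ x) := h
    _ = ∑ p ∈ c.rep x, ∑ q ∈ c.rep p.2, p.1 ⊗ₜ[R] (q.1 ⊗ₜ[R] q.2) := by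
        rw [c.rep_eq x]
        simp only [map_sum, lTensor_tmul]
        refine Finset.sum_congr rfl fun p _ => ?_
        rw [c.rep_eq p.2]
        simp [TensorProduct.tmul_sum]

end Rep

section Tensor

lemma sum_tmul_sum {ι κ : Type*} (s : Finset ι) (t : Finset κ) (f : ι → C) (g : κ → D) :
    (∑ i ∈ s, f i) ⊗ₜ[R] (∑ j ∈ t, g j) = ∑ i ∈ s, ∑ j ∈ t, f i ⊗ₜ[R] g j := by
  rw [TensorProduct.sum_tmul]
  exact Finset.sum_congr rfl fun i _ => TensorProduct.tmul_sum _ _ _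

lemma rtmul {M : Type*} [AddCommGroup M] [Module R M] (r : R) (v : M) :
    r ⊗ₜ[R] v = (1 : R) ⊗ₜ[R] (r • v) := by
  calc r ⊗ₜ[R] v = (r • (1 : R)) ⊗ₜ[R] v := by rw [smul_eq_mul, mul_one]
    _ = (1 : R) ⊗ₜ[R] (r • v) := TensorProduct.smul_tmul _ _ _

lemma tmulr {M : Type*} [AddCommGroup M] [Module R M] (v : M) (r : R) :
    v ⊗ₜ[R] r = (r • v) ⊗ₜ[R] (1 : R) := by
  calc v ⊗ₜ[R] r = v ⊗ₜ[R] (r • (1 : R)) := by rw [smul_eq_mul, mul_one]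
    _ = (r • v) ⊗ₜ[R] (1 : R) := (TensorProduct.smul_tmul _ _ _).symm

lemma mul_smul_tmul {M N : Type*} [AddCommGroup M] [Module R M] [AddCommGroup N] [Module R N]
    (a b : R) (u : M) (v : N) :
    (a * b) • (u ⊗ₜ[R] v) = (a • u) ⊗ₜ[R] (b • v) := by
  rw [mul_smul, ← TensorProduct.tmul_smul, TensorProduct.smul_tmul']

/-- Comultiplication on a tensor product. -/
noncomputable def coTensorΔ (c : CoData R C) (d : CoData R D) :
    C ⊗[R] D →ₗ[R] (C ⊗[R] D) ⊗[R] (C ⊗[R] D) :=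
  (TensorProduct.tensorTensorTensorComm R C C D D).toLinearMap ∘ₗ TensorProduct.map c.Δ d.Δ

lemma coTensorΔ_tmul (c : CoData R C) (d : CoData R D) (x : C) (y : D) :
    coTensorΔ c d (x ⊗ₜ[R] y)
      = ∑ p ∈ c.rep x, ∑ q ∈ d.rep y, (p.1 ⊗ₜ[R] q.1) ⊗ₜ[R] (p.2 ⊗ₜ[R] q.2) := by
  simp only [coTensorΔ, comp_apply, TensorProduct.map_tmul, LinearEquiv.coe_coe]
  rw [c.rep_eq x, d.rep_eq y, sum_tmul_sum]
  simp [map_sum]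

/-- Tensor product of cocommutative coalgebra data. -/
noncomputable def CoData.tensor (c : CoData R C) (d : CoData R D) : CoData R (C ⊗[R] D) where
  Δ := coTensorΔ c d
  ε := LinearMap.mul' R R ∘ₗ TensorProduct.map c.ε d.ε
  coassoc := by
    have hc : c.Δ.rTensor C ∘ₗ c.Δ
        = (TensorProduct.assoc R C C C).symm.toLinearMap ∘ₗ (c.Δ.lTensor C ∘ₗ c.Δ) := by
      rw [← c.coassoc]; ext z; simp
    have hd : d.Δ.rTensor D ∘ₗ d.Δ
        = (TensorProduct.assoc R D D D).symm.toLinearMap ∘ₗ (d.Δ.lTensor D ∘ₗ d.Δ) := by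
      rw [← d.coassoc]; ext z; simp
    have nat1 : ((TensorProduct.map c.Δ d.Δ).rTensor (C ⊗[R] D)) ∘ₗ
          (TensorProduct.tensorTensorTensorComm R C C D D).toLinearMap
        = (TensorProduct.tensorTensorTensorComm R (C ⊗[R] C) C (D ⊗[R] D) D).toLinearMap ∘ₗ
          TensorProduct.map (c.Δ.rTensor C) (d.Δ.rTensor D) := by
      ext; simp
    have nat2 : ((TensorProduct.map c.Δ d.Δ).lTensor (C ⊗[R] D)) ∘ₗ
          (TensorProduct.tensorTensorTensorComm R C C D D).toLinearMap
        = (TensorProduct.tensorTensorTensorComm R C (C ⊗[R] C) D (D ⊗[R] D)).toLinearMap ∘ₗ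
          TensorProduct.map (c.Δ.lTensor C) (d.Δ.lTensor D) := by
      ext; simp
    have shuffle :
        (TensorProduct.assoc R (C ⊗[R] D) (C ⊗[R] D) (C ⊗[R] D)).toLinearMap ∘ₗ
          ((TensorProduct.tensorTensorTensorComm R C C D D).toLinearMap.rTensor (C ⊗[R] D)) ∘ₗ
          (TensorProduct.tensorTensorTensorComm R (C ⊗[R] C) C (D ⊗[R] D) D).toLinearMap ∘ₗ
          TensorProduct.map (TensorProduct.assoc R C C C).symm.toLinearMap
            (TensorProduct.assoc R D D D).symm.toLinearMap
        = ((TensorProduct.tensorTensorTensorComm R C C D D).toLinearMap.lTensor (C ⊗[R] D)) ∘ₗ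
            (TensorProduct.tensorTensorTensorComm R C (C ⊗[R] C) D (D ⊗[R] D)).toLinearMap := by
      ext x y
      simp
    apply LinearMap.ext; intro z
    have e1 := LinearMap.congr_fun nat1 (TensorProduct.map c.Δ d.Δ z)
    have e2 := LinearMap.congr_fun nat2 (TensorProduct.map c.Δ d.Δ z)
    have e3 := LinearMap.congr_fun (congrArg (fun f => TensorProduct.map f (d.Δ.rTensor D ∘ₗ d.Δ)) hc) z
    simp only [comp_apply, coTensorΔ, LinearEquiv.coe_coe, LinearMap.rTensor_comp,
      LinearMap.lTensor_comp] at *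
    rw [e1, e2]
    have e4 : TensorProduct.map (c.Δ.rTensor C) (d.Δ.rTensor D) (TensorProduct.map c.Δ d.Δ z)
        = TensorProduct.map (TensorProduct.assoc R C C C).symm.toLinearMap
            (TensorProduct.assoc R D D D).symm.toLinearMap
            (TensorProduct.map (c.Δ.lTensor C) (d.Δ.lTensor D)
              (TensorProduct.map c.Δ d.Δ z)) := by
      have hcd : TensorProduct.map (c.Δ.rTensor C ∘ₗ c.Δ) (d.Δ.rTensor D ∘ₗ d.Δ)
          = TensorProduct.map
              ((TensorProduct.assoc R C C C).symm.toLinearMap ∘ₗ (c.Δ.lTensor C ∘ₗ c.Δ))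
              ((TensorProduct.assoc R D D D).symm.toLinearMap ∘ₗ (d.Δ.lTensor D ∘ₗ d.Δ)) := by
        rw [hc, hd]
      have h := LinearMap.congr_fun hcd z
      simpa only [TensorProduct.map_comp, comp_apply] using h
    rw [e4]
    exact LinearMap.congr_fun shuffle (TensorProduct.map (c.Δ.lTensor C) (d.Δ.lTensor D)
      (TensorProduct.map c.Δ d.Δ z))
  rCounit := by
    apply TensorProduct.ext'
    intro x y
    simp only [comp_apply, coTensorΔ_tmul, map_sum, rTensor_tmul, TensorProduct.map_tmul,
      LinearMap.mul'_apply, TensorProduct.mk_apply]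
    calc ∑ p ∈ c.rep x, ∑ q ∈ d.rep y,
          (c.ε p.1 * d.ε q.1) ⊗ₜ[R] (p.2 ⊗ₜ[R] q.2)
        = ∑ p ∈ c.rep x, ∑ q ∈ d.rep y,
            (1 : R) ⊗ₜ[R] ((c.ε p.1 • p.2) ⊗ₜ[R] (d.ε q.1 • q.2)) := by
          refine Finset.sum_congr rfl fun p _ => Finset.sum_congr rfl fun q _ => ?_
          rw [rtmul, mul_smul_tmul]
        _ = (1 : R) ⊗ₜ[R] ((∑ p ∈ c.rep x, c.ε p.1 • p.2) ⊗ₜ[R]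
              (∑ q ∈ d.rep y, d.ε q.1 • q.2)) := by
          rw [sum_tmul_sum, TensorProduct.tmul_sum]
          exact Finset.sum_congr rfl fun p _ => by rw [TensorProduct.tmul_sum]
        _ = (1 : R) ⊗ₜ[R] (x ⊗ₜ[R] y) := by rw [c.sum_ε_smul x, d.sum_ε_smul y]
  lCounit := by
    apply TensorProduct.ext'
    intro x y
    simp only [comp_apply, coTensorΔ_tmul, map_sum, lTensor_tmul, TensorProduct.map_tmul,
      LinearMap.mul'_apply, LinearMap.flip_apply, TensorProduct.mk_apply]
    calc ∑ p ∈ c.rep x, ∑ q ∈ d.rep y,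
          (p.1 ⊗ₜ[R] q.1) ⊗ₜ[R] (c.ε p.2 * d.ε q.2)
        = ∑ p ∈ c.rep x, ∑ q ∈ d.rep y,
            ((c.ε p.2 • p.1) ⊗ₜ[R] (d.ε q.2 • q.1)) ⊗ₜ[R] (1 : R) := by
          refine Finset.sum_congr rfl fun p _ => Finset.sum_congr rfl fun q _ => ?_
          rw [tmulr, mul_smul_tmul]
        _ = ((∑ p ∈ c.rep x, c.ε p.2 • p.1) ⊗ₜ[R] (∑ q ∈ d.rep y, d.ε q.2 • q.1)) ⊗ₜ[R]
              (1 : R) := by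
          rw [sum_tmul_sum, TensorProduct.sum_tmul]
          exact Finset.sum_congr rfl fun p _ => by rw [TensorProduct.sum_tmul]
        _ = (x ⊗ₜ[R] y) ⊗ₜ[R] (1 : R) := by rw [c.sum_smul_ε x, d.sum_smul_ε y]
  cocomm := by
    apply TensorProduct.ext'
    intro x y
    simp only [comp_apply, coTensorΔ_tmul, map_sum, LinearEquiv.coe_coe,
      TensorProduct.comm_tmul]
    calc ∑ p ∈ c.rep x, ∑ q ∈ d.rep y, (p.2 ⊗ₜ[R] q.2) ⊗ₜ[R] (p.1 ⊗ₜ[R] q.1)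
        = TensorProduct.tensorTensorTensorComm R C C D D
            ((∑ p ∈ c.rep x, p.2 ⊗ₜ[R] p.1) ⊗ₜ[R] (∑ q ∈ d.rep y, q.2 ⊗ₜ[R] q.1)) := by
          rw [sum_tmul_sum]
          simp [map_sum]
        _ = TensorProduct.tensorTensorTensorComm R C C D D (c.Δ x ⊗ₜ[R] d.Δ y) := by
          rw [c.cocomm_rep x, d.cocomm_rep y]
        _ = ∑ p ∈ c.rep x, ∑ q ∈ d.rep y, (p.1 ⊗ₜ[R] q.1) ⊗ₜ[R] (p.2 ⊗ₜ[R] q.2) := by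
          rw [c.rep_eq x, d.rep_eq y, sum_tmul_sum]
          simp [map_sum]

@[simp]
lemma CoData.tensor_Δ (c : CoData R C) (d : CoData R D) :
    (c.tensor d).Δ = coTensorΔ c d := rfl

@[simp]
lemma CoData.tensor_ε_tmul (c : CoData R C) (d : CoData R D) (x : C) (y : D) :
    (c.tensor d).ε (x ⊗ₜ[R] y) = c.ε x * d.ε y := by
  simp [CoData.tensor, comp_apply]

end Tensor

section AlgTensor

/-- Tensor product of algebra data. -/
noncomputable def AlgData.tensor (a : AlgData R A) (b : AlgData R B) : AlgData R (A ⊗[R] B) where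
  m := TensorProduct.map a.m b.m ∘ₗ (TensorProduct.tensorTensorTensorComm R A B A B).toLinearMap
  e := a.e ⊗ₜ[R] b.e
  assoc := by
    intro x y z
    induction x using TensorProduct.induction_on with
    | zero => simp
    | tmul x1 x2 =>
      induction y using TensorProduct.induction_on with
      | zero => simp
      | tmul y1 y2 =>
        induction z using TensorProduct.induction_on with
        | zero => simp
        | tmul z1 z2 => simp [a.assoc, b.assoc]
        | add u v hu hv => simp only [TensorProduct.tmul_add, map_add, hu, hv]
      | add u v hu hv =>
        simp only [TensorProduct.add_tmul, TensorProduct.tmul_add, map_add, hu, hv]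
    | add u v hu hv => simp only [TensorProduct.add_tmul, map_add, hu, hv]
  one_mul := by
    intro x
    induction x using TensorProduct.induction_on with
    | zero => simp
    | tmul x1 x2 => simp [a.one_mul, b.one_mul]
    | add u v hu hv => simp only [TensorProduct.tmul_add, map_add, hu, hv]
  mul_one := by
    intro x
    induction x using TensorProduct.induction_on with
    | zero => simp
    | tmul x1 x2 => simp [a.mul_one, b.mul_one]
    | add u v hu hv => simp only [TensorProduct.add_tmul, map_add, hu, hv]

@[simp]
lemma AlgData.tensor_m_tmul (a : AlgData R A) (b : AlgData R B) (x1 y1 : A) (x2 y2 : B) :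
    (a.tensor b).m ((x1 ⊗ₜ[R] x2) ⊗ₜ[R] (y1 ⊗ₜ[R] y2))
      = a.m (x1 ⊗ₜ[R] y1) ⊗ₜ[R] b.m (x2 ⊗ₜ[R] y2) := by
  simp [AlgData.tensor]

@[simp]
lemma AlgData.tensor_e (a : AlgData R A) (b : AlgData R B) :
    (a.tensor b).e = a.e ⊗ₜ[R] b.e := rfl

end AlgTensor

section Swap23

/-- In a cocommutative coalgebra, the middle two legs of the double comultiplication
can be exchanged. -/
lemma CoData.swap23 (c : CoData R C) :
    (TensorProduct.tensorTensorTensorComm R C C C C).toLinearMap ∘ₗ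
      (TensorProduct.map c.Δ c.Δ ∘ₗ c.Δ) = TensorProduct.map c.Δ c.Δ ∘ₗ c.Δ := by
  set τ : C ⊗[R] C →ₗ[R] C ⊗[R] C := (TensorProduct.comm R C C).toLinearMap with hτ
  set D3 : C →ₗ[R] C ⊗[R] (C ⊗[R] C) := c.Δ.lTensor C ∘ₗ c.Δ with hD3
  set s : C ⊗[R] (C ⊗[R] C) →ₗ[R] C ⊗[R] (C ⊗[R] C) :=
    (TensorProduct.assoc R C C C).toLinearMap ∘ₗ τ.rTensor C ∘ₗ
      (TensorProduct.assoc R C C C).symm.toLinearMap with hs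
  have coas : (TensorProduct.assoc R C C C).symm.toLinearMap ∘ₗ D3 = c.Δ.rTensor C ∘ₗ c.Δ := by
    rw [hD3, ← c.coassoc]
    apply LinearMap.ext; intro w
    simp
  have lemA : s ∘ₗ D3 = D3 := by
    apply LinearMap.ext; intro w
    have h1 := LinearMap.congr_fun coas w
    have h2 := LinearMap.congr_fun c.coassoc w
    have h3 := LinearMap.congr_fun c.cocomm w
    simp only [hs, hD3, comp_apply, LinearEquiv.coe_coe] at h1 h2 h3 ⊢
    rw [h1]
    have : (τ.rTensor C) ((c.Δ.rTensor C) (c.Δ w)) = (c.Δ.rTensor C) (c.Δ w) := by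
      have := LinearMap.congr_fun (LinearMap.rTensor_comp C τ c.Δ).symm (c.Δ w)
      simp only [comp_apply] at this
      have hτΔ : τ ∘ₗ c.Δ = c.Δ := c.cocomm
      rw [this, hτΔ]
    rw [this, h2]
  -- E = α₂⁻¹ ∘ lTensor C D3 ∘ Δ
  have hE : TensorProduct.map c.Δ c.Δ ∘ₗ c.Δ
      = (TensorProduct.assoc R C C (C ⊗[R] C)).symm.toLinearMap ∘ₗ
          (LinearMap.lTensor C D3) ∘ₗ c.Δ := by
    apply LinearMap.ext; intro w
    have h1 := LinearMap.congr_fun coas w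
    simp only [comp_apply, LinearEquiv.coe_coe, hD3, lTensor_comp, comp_apply] at h1 ⊢
    -- map Δ Δ (Δ w) = assoc₂⁻¹ (lTensor (lTensor Δ) (lTensor Δ (Δ w)))
    have nat : (TensorProduct.assoc R C C (C ⊗[R] C)).symm.toLinearMap ∘ₗ
        (LinearMap.lTensor C (c.Δ.lTensor C))
        = (c.Δ.lTensor (C ⊗[R] C)) ∘ₗ (TensorProduct.assoc R C C C).symm.toLinearMap := by
      ext; simp
    have h2 := LinearMap.congr_fun nat ((c.Δ.lTensor C) (c.Δ w))
    simp only [comp_apply, LinearEquiv.coe_coe] at h2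
    rw [h2]
    -- now goal : map Δ Δ (Δ w) = lTensor Δ (assoc⁻¹ (lTensor Δ (Δ w)))
    have h3 : (TensorProduct.assoc R C C C).symm ((c.Δ.lTensor C) (c.Δ w))
        = (c.Δ.rTensor C) (c.Δ w) := h1
    rw [h3]
    have : TensorProduct.map c.Δ c.Δ = (c.Δ.lTensor (C ⊗[R] C)) ∘ₗ (c.Δ.rTensor C) := by
      rw [lTensor, rTensor, ← TensorProduct.map_comp]
      simp
    rw [this]
    simp only [comp_apply]
  have shuffle : (TensorProduct.tensorTensorTensorComm R C C C C).toLinearMap ∘ₗ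
        (TensorProduct.assoc R C C (C ⊗[R] C)).symm.toLinearMap
      = (TensorProduct.assoc R C C (C ⊗[R] C)).symm.toLinearMap ∘ₗ (LinearMap.lTensor C s) := by
    apply TensorProduct.ext'
    intro x y
    simp only [comp_apply, LinearEquiv.coe_coe]
    induction y using TensorProduct.induction_on with
    | zero => simp
    | tmul y1 y2 =>
      induction y2 using TensorProduct.induction_on with
      | zero => simp
      | tmul z1 z2 => simp [hs, hτ]
      | add u v hu hv => simp only [TensorProduct.tmul_add, map_add, hu, hv]
    | add u v hu hv => simp only [TensorProduct.tmul_add, map_add, hu, hv]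
  rw [hE]
  apply LinearMap.ext; intro w
  have h1 := LinearMap.congr_fun shuffle ((LinearMap.lTensor C D3) (c.Δ w))
  simp only [comp_apply, LinearEquiv.coe_coe] at h1 ⊢
  rw [h1]
  have h2 := LinearMap.congr_fun (LinearMap.lTensor_comp C s D3).symm (c.Δ w)
  simp only [comp_apply] at h2
  rw [h2, lemA]

end Swap23

section Bialg

/-- Naturality of `tensorTensorTensorComm`. -/
lemma ttc_nat {M N P Q M' N' P' Q' : Type*}
    [AddCommGroup M] [Module R M] [AddCommGroup N] [Module R N]
    [AddCommGroup P] [Module R P] [AddCommGroup Q] [Module R Q]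
    [AddCommGroup M'] [Module R M'] [AddCommGroup N'] [Module R N']
    [AddCommGroup P'] [Module R P'] [AddCommGroup Q'] [Module R Q']
    (f : M →ₗ[R] M') (g : N →ₗ[R] N') (h : P →ₗ[R] P') (k : Q →ₗ[R] Q') :
    (TensorProduct.tensorTensorTensorComm R M' N' P' Q').toLinearMap ∘ₗ
        TensorProduct.map (TensorProduct.map f g) (TensorProduct.map h k)
      = TensorProduct.map (TensorProduct.map f h) (TensorProduct.map g k) ∘ₗ
          (TensorProduct.tensorTensorTensorComm R M N P Q).toLinearMap := by
  ext
  simp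

/-- Bialgebra data on a cocommutative coalgebra. -/
structure BiData (R A : Type*) [CommRing R] [AddCommGroup A] [Module R A] where
  alg : AlgData R A
  co : CoData R A
  Δm : co.Δ ∘ₗ alg.m = (alg.tensor alg).m ∘ₗ TensorProduct.map co.Δ co.Δ
  εm : co.ε ∘ₗ alg.m = LinearMap.mul' R R ∘ₗ TensorProduct.map co.ε co.ε
  Δe : co.Δ alg.e = alg.e ⊗ₜ[R] alg.e
  εe : co.ε alg.e = 1

variable {A' : Type*} [AddCommGroup A'] [Module R A']

lemma BiData.Δ_isAM (b : BiData R A) : IsAM b.alg (b.alg.tensor b.alg) b.co.Δ :=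
  ⟨b.Δm, by rw [b.Δe]; rfl⟩

lemma BiData.m_isCM (b : BiData R A) : IsCM (b.co.tensor b.co) b.co b.alg.m := by
  constructor
  · rw [b.Δm]
    apply LinearMap.ext; intro z
    simp only [CoData.tensor_Δ, coTensorΔ, comp_apply, LinearEquiv.coe_coe]
    rfl
  · rw [b.εm]
    rfl

/-- The R-algebra data on the base ring. -/
noncomputable def aR : AlgData R R where
  m := LinearMap.mul' R R
  e := 1
  assoc := by intros; simp [mul_assoc]
  one_mul := by intros; simp
  mul_one := by intros; simp

lemma cunit_aR (c : CoData R C) : cunit c (aR (R := R)) = c.ε := by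
  apply LinearMap.ext; intro x
  simp [cunit, aR, smul_eq_mul]

lemma ε_isAM (b : BiData R A) : IsAM b.alg (aR (R := R)) b.co.ε :=
  ⟨b.εm, b.εe⟩

lemma CoData.ε_mul_map (c : CoData R C) :
    LinearMap.mul' R R ∘ₗ TensorProduct.map c.ε c.ε ∘ₗ c.Δ = c.ε := by
  apply LinearMap.ext; intro x
  simp only [comp_apply, c.rep_eq x, map_sum, TensorProduct.map_tmul, LinearMap.mul'_apply]
  exact c.sum_ε_mul x

lemma map_cunit_cunit (c : CoData R C) (b : BiData R A) :
    TensorProduct.map (cunit c b.alg) (cunit c b.alg) ∘ₗ c.Δ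
      = cunit c (b.alg.tensor b.alg) := by
  apply LinearMap.ext; intro x
  simp only [comp_apply, c.rep_eq x, map_sum, TensorProduct.map_tmul, cunit,
    LinearMap.smulRight_apply, AlgData.tensor_e]
  calc ∑ p ∈ c.rep x, (c.ε p.1 • b.alg.e) ⊗ₜ[R] (c.ε p.2 • b.alg.e)
      = ∑ p ∈ c.rep x, (c.ε p.1 * c.ε p.2) • (b.alg.e ⊗ₜ[R] b.alg.e) := by
        exact Finset.sum_congr rfl fun p _ => (mul_smul_tmul _ _ _ _).symm
    _ = c.ε x • (b.alg.e ⊗ₜ[R] b.alg.e) := by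
        rw [← Finset.sum_smul, c.sum_ε_mul x]

/-- In the cocommutative setting, convolution of coalgebra morphisms into a bialgebra
is a coalgebra morphism. -/
lemma conv_isCM (c : CoData R C) (b : BiData R A) {f g : C →ₗ[R] A}
    (hf : IsCM c b.co f) (hg : IsCM c b.co g) : IsCM c b.co (conv c b.alg f g) := by
  constructor
  · apply LinearMap.ext; intro x
    have h1 := LinearMap.congr_fun b.Δm (TensorProduct.map f g (c.Δ x))
    have e2 : TensorProduct.map b.co.Δ b.co.Δ ∘ₗ TensorProduct.map f g
        = TensorProduct.map (TensorProduct.map f f) (TensorProduct.map g g) ∘ₗ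
            TensorProduct.map c.Δ c.Δ := by
      rw [← TensorProduct.map_comp, hf.1, hg.1, TensorProduct.map_comp]
    have h2 := LinearMap.congr_fun e2 (c.Δ x)
    have h3 := LinearMap.congr_fun (ttc_nat f f g g) (TensorProduct.map c.Δ c.Δ (c.Δ x))
    have h4 := LinearMap.congr_fun c.swap23 x
    have e5 : TensorProduct.map (conv c b.alg f g) (conv c b.alg f g)
        = TensorProduct.map b.alg.m b.alg.m ∘ₗ
            TensorProduct.map (TensorProduct.map f g) (TensorProduct.map f g) ∘ₗ
            TensorProduct.map c.Δ c.Δ := by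
      simp only [conv, TensorProduct.map_comp]
    have h5 := LinearMap.congr_fun e5 (c.Δ x)
    simp only [conv, comp_apply, LinearEquiv.coe_coe] at h1 h2 h3 h4 h5 ⊢
    rw [h1, h2, h5]
    -- LHS : (alg.tensor alg).m (map (map f f) (map g g) (map Δ Δ (Δ x)))
    show (b.alg.tensor b.alg).m _ = _
    simp only [AlgData.tensor, comp_apply, LinearEquiv.coe_coe]
    rw [h3, h4]
  · apply LinearMap.ext; intro x
    have h1 := LinearMap.congr_fun b.εm (TensorProduct.map f g (c.Δ x))
    have e2 : TensorProduct.map b.co.ε b.co.ε ∘ₗ TensorProduct.map f g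
        = TensorProduct.map c.ε c.ε := by
      rw [← TensorProduct.map_comp, hf.2, hg.2]
    have h2 := LinearMap.congr_fun e2 (c.Δ x)
    have h3 := LinearMap.congr_fun c.ε_mul_map x
    simp only [conv, comp_apply] at h1 h2 h3 ⊢
    rw [h1, h2, h3]

/-- An antipode on a cocommutative bialgebra is a coalgebra morphism. -/
lemma antipode_isCM (b : BiData R A) {S : A →ₗ[R] A}
    (h1 : conv b.co b.alg S LinearMap.id = cunit b.co b.alg)
    (h2 : conv b.co b.alg LinearMap.id S = cunit b.co b.alg) :
    IsCM b.co b.co S := by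
  constructor
  · -- Δ ∘ S = map S S ∘ Δ  via uniqueness of convolution inverses of Δ
    have hF : conv b.co (b.alg.tensor b.alg) b.co.Δ (b.co.Δ ∘ₗ S)
        = cunit b.co (b.alg.tensor b.alg) := by
      have e := conv_postcomp b.co b.alg (b.alg.tensor b.alg) b.Δ_isAM LinearMap.id S
      rw [h2, cunit_postcomp b.co b.alg (b.alg.tensor b.alg) b.Δ_isAM] at e
      simp only [LinearMap.comp_id] at e
      exact e.symm
    have hG : conv b.co (b.alg.tensor b.alg) (TensorProduct.map S S ∘ₗ b.co.Δ) b.co.Δ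
        = cunit b.co (b.alg.tensor b.alg) := by
      apply LinearMap.ext; intro x
      have e1 : TensorProduct.map (TensorProduct.map S S ∘ₗ b.co.Δ) b.co.Δ
          = TensorProduct.map (TensorProduct.map S S)
              (TensorProduct.map LinearMap.id LinearMap.id) ∘ₗ
              TensorProduct.map b.co.Δ b.co.Δ := by
        rw [← TensorProduct.map_comp]
        congr 1 <;> simp
      have h3 := LinearMap.congr_fun (ttc_nat S S LinearMap.id LinearMap.id)
        (TensorProduct.map b.co.Δ b.co.Δ (b.co.Δ x))
      have h4 := LinearMap.congr_fun b.co.swap23 x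
      have e5 : TensorProduct.map
            (b.alg.m ∘ₗ TensorProduct.map S LinearMap.id ∘ₗ b.co.Δ)
            (b.alg.m ∘ₗ TensorProduct.map S LinearMap.id ∘ₗ b.co.Δ)
          = TensorProduct.map b.alg.m b.alg.m ∘ₗ
              TensorProduct.map (TensorProduct.map S LinearMap.id)
                (TensorProduct.map S LinearMap.id) ∘ₗ
              TensorProduct.map b.co.Δ b.co.Δ := by
        simp only [TensorProduct.map_comp]
      have h5 := LinearMap.congr_fun e5 (b.co.Δ x)
      have h6 := LinearMap.congr_fun (map_cunit_cunit b.co b) x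
      simp only [conv, comp_apply, LinearEquiv.coe_coe] at h3 h4 h5 h6 ⊢
      rw [LinearMap.congr_fun e1 (b.co.Δ x)]
      show (b.alg.tensor b.alg).m _ = _
      simp only [AlgData.tensor, comp_apply, LinearEquiv.coe_coe]
      rw [h3, h4, ← h5]
      have : TensorProduct.map (b.alg.m ∘ₗ TensorProduct.map S LinearMap.id ∘ₗ b.co.Δ)
          (b.alg.m ∘ₗ TensorProduct.map S LinearMap.id ∘ₗ b.co.Δ)
          = TensorProduct.map (cunit b.co b.alg) (cunit b.co b.alg) := by
        rw [show b.alg.m ∘ₗ TensorProduct.map S LinearMap.id ∘ₗ b.co.Δ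
            = conv b.co b.alg S LinearMap.id from rfl, h1]
      rw [this, h6]
      rfl
    exact (conv_inv_unique b.co (b.alg.tensor b.alg) hG hF).symm
  · -- ε ∘ S = ε
    have e := conv_postcomp b.co b.alg (aR (R := R)) (ε_isAM b) S LinearMap.id
    rw [h1, cunit_postcomp b.co b.alg (aR (R := R)) (ε_isAM b), cunit_aR] at e
    have : b.co.ε ∘ₗ LinearMap.id = cunit b.co (aR (R := R)) := by
      rw [cunit_aR]; simp
    rw [this, conv_cunit_right] at e
    exact e.symm

lemma sum_rot3 {α β γ M : Type*} [AddCommMonoid M] (s : Finset α) (t : Finset β)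
    (u : Finset γ) (f : α → β → γ → M) :
    ∑ i ∈ s, ∑ k ∈ t, ∑ j ∈ u, f i k j = ∑ j ∈ u, ∑ i ∈ s, ∑ k ∈ t, f i k j := by
  calc ∑ i ∈ s, ∑ k ∈ t, ∑ j ∈ u, f i k j
      = ∑ i ∈ s, ∑ j ∈ u, ∑ k ∈ t, f i k j :=
        Finset.sum_congr rfl fun i _ => Finset.sum_comm
    _ = ∑ j ∈ u, ∑ i ∈ s, ∑ k ∈ t, f i k j := Finset.sum_comm

lemma IsCM.comp {E : Type*} [AddCommGroup E] [Module R E]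
    {c : CoData R C} {d : CoData R D} {e : CoData R E} {f : C →ₗ[R] D} {g : D →ₗ[R] E}
    (hf : IsCM c d f) (hg : IsCM d e g) : IsCM c e (g ∘ₗ f) := by
  constructor
  · apply LinearMap.ext; intro x
    have h1 := LinearMap.congr_fun hg.1 (f x)
    have h2 := LinearMap.congr_fun hf.1 x
    simp only [comp_apply] at h1 h2 ⊢
    rw [h1, h2]
    have h4 : TensorProduct.map g g ∘ₗ TensorProduct.map f f
        = TensorProduct.map (g ∘ₗ f) (g ∘ₗ f) := (TensorProduct.map_comp g g f f).symm
    exact LinearMap.congr_fun h4 (c.Δ x)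
  · apply LinearMap.ext; intro x
    have h1 := LinearMap.congr_fun hg.2 (f x)
    have h2 := LinearMap.congr_fun hf.2 x
    simp only [comp_apply] at h1 h2 ⊢
    rw [h1, h2]

lemma conv_sum_right {ι : Type*} (c : CoData R C) (a : AlgData R A) (f : C →ₗ[R] A)
    (s : Finset ι) (g : ι → (C →ₗ[R] A)) :
    conv c a f (∑ j ∈ s, g j) = ∑ j ∈ s, conv c a f (g j) := by
  have hmap : TensorProduct.map f (∑ j ∈ s, g j) = ∑ j ∈ s, TensorProduct.map f (g j) := by
    apply TensorProduct.ext'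
    intro u v
    simp [TensorProduct.tmul_sum]
  apply LinearMap.ext; intro x
  simp only [conv, comp_apply, hmap, LinearMap.sum_apply, map_sum]

end Bialg

end HBaux


namespace HBaux

section Brace

open TensorProduct LinearMap

variable {R H : Type*} [CommRing R] [AddCommGroup H] [Module R H] [Coalgebra R H]

/-- Coalgebra data of `H`. -/
noncomputable def cH (hc : Cocomm R H) : CoData R H where
  Δ := Coalgebra.comul
  ε := Coalgebra.counit
  coassoc := Coalgebra.coassoc
  rCounit := Coalgebra.rTensor_counit_comp_comul
  lCounit := Coalgebra.lTensor_counit_comp_comul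
  cocomm := LinearMap.ext fun a => hc a

@[simp] lemma cH_Δ (hc : Cocomm R H) : (cH hc).Δ = Coalgebra.comul := rfl
@[simp] lemma cH_ε (hc : Cocomm R H) : (cH hc).ε = Coalgebra.counit := rfl

/-- Algebra data of a `HopfMul`. -/
noncomputable def algOf (P : HopfMul R H) : AlgData R H where
  m := TensorProduct.lift P.mul
  e := P.one
  assoc := by intro x y z; simp only [TensorProduct.lift.tmul]; exact P.mul_assoc x y z
  one_mul := by intro x; simp only [TensorProduct.lift.tmul]; exact P.one_mul x
  mul_one := by intro x; simp only [TensorProduct.lift.tmul]; exact P.mul_one x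

@[simp] lemma algOf_m_tmul (P : HopfMul R H) (x y : H) :
    (algOf P).m (x ⊗ₜ[R] y) = P.mul x y := by simp [algOf]

@[simp] lemma algOf_e (P : HopfMul R H) : (algOf P).e = P.one := rfl

variable (hc : Cocomm R H)

universe w in
lemma sum_uliftFin {M : Type*} [AddCommMonoid M] {ι : Type*} (s : Finset ι) (f : ι → M) :
    ∑ i : ULift.{w} (Fin s.card), f (s.equivFin.symm i.down) = ∑ i ∈ s, f i := by
  calc ∑ i : ULift.{w} (Fin s.card), f (s.equivFin.symm i.down)
      = ∑ j : Fin s.card, f (s.equivFin.symm j) :=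
        Equiv.sum_comp Equiv.ulift (fun j => f (s.equivFin.symm j))
    _ = ∑ a : {x // x ∈ s}, f a := Equiv.sum_comp s.equivFin.symm (fun a => f a)
    _ = ∑ i ∈ s, f i := by rw [← Finset.sum_attach s f, Finset.univ_eq_attach]

universe w in
/-- A universe-adjusted copy of a representation (the Hopf-structure axioms quantify over
representations at fixed universes). -/
noncomputable def reprULift {ι : Type*} {x : H} (r : Coalgebra.Repr R x ι) :
    Coalgebra.Repr R x (ULift.{w} (Fin r.index.card)) where
  index := Finset.univ
  left := fun i => r.left (r.index.equivFin.symm i.down)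
  right := fun i => r.right (r.index.equivFin.symm i.down)
  eq := by
    rw [show (∑ i : ULift.{w} (Fin r.index.card),
        r.left (r.index.equivFin.symm i.down) ⊗ₜ[R] r.right (r.index.equivFin.symm i.down))
      = ∑ i ∈ r.index, r.left i ⊗ₜ[R] r.right i from
        sum_uliftFin r.index (fun i => r.left i ⊗ₜ[R] r.right i)]
    exact r.eq

lemma sum_reprULift {M : Type*} [AddCommMonoid M] {x : H} {ιr : Type*} (r : Coalgebra.Repr R x ιr)
    (f : H → H → M) :
    ∑ i ∈ (reprULift (R := R) r).index,
        f ((reprULift (R := R) r).left i) ((reprULift (R := R) r).right i)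
      = ∑ i ∈ r.index, f (r.left i) (r.right i) :=
  sum_uliftFin r.index (fun i => f (r.left i) (r.right i))

/-- Counit collapse for `Coalgebra.Repr`. -/
lemma repr_counit_smul {x : H} {ιr : Type*} (r : Coalgebra.Repr R x ιr) :
    ∑ i ∈ r.index, Coalgebra.counit (R := R) (r.left i) • r.right i = x := by
  have h := Coalgebra.sum_counit_tmul_eq (R := R) r
  have h2 : TensorProduct.lid R H
      (∑ i ∈ r.index, Coalgebra.counit (R := R) (r.left i) ⊗ₜ[R] r.right i)
      = ∑ i ∈ r.index, Coalgebra.counit (R := R) (r.left i) • r.right i := by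
    rw [map_sum]
    simp only [TensorProduct.lid_tmul]
  rw [← h2, h]
  simp only [TensorProduct.lid_tmul, one_smul]

lemma repr_smul_counit {x : H} {ιr : Type*} (r : Coalgebra.Repr R x ιr) :
    ∑ i ∈ r.index, Coalgebra.counit (R := R) (r.right i) • r.left i = x := by
  have h := Coalgebra.sum_tmul_counit_eq (R := R) r
  have h2 : TensorProduct.rid R H
      (∑ i ∈ r.index, r.left i ⊗ₜ[R] Coalgebra.counit (R := R) (r.right i))
      = ∑ i ∈ r.index, Coalgebra.counit (R := R) (r.right i) • r.left i := by
    rw [map_sum]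
    simp only [TensorProduct.rid_tmul]
  rw [← h2, h]
  simp only [TensorProduct.rid_tmul, one_smul]

lemma repr_counit_mul {x : H} {ιr : Type*} (r : Coalgebra.Repr R x ιr) :
    ∑ i ∈ r.index, Coalgebra.counit (R := R) (r.left i) * Coalgebra.counit (R := R) (r.right i)
      = Coalgebra.counit (R := R) x := by
  have := congrArg (Coalgebra.counit (R := R)) (repr_counit_smul r)
  simpa [map_sum, smul_eq_mul] using this

/-- Evaluation of a convolution on `H` through an arbitrary `Repr`. -/
lemma conv_repr {A : Type*} [AddCommGroup A] [Module R A] (a : AlgData R A)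
    (f g : H →ₗ[R] A) {x : H} {ιr : Type*} (r : Coalgebra.Repr R x ιr) :
    conv (cH hc) a f g x = ∑ i ∈ r.index, a.m (f (r.left i) ⊗ₜ[R] g (r.right i)) := by
  simp only [conv, comp_apply, cH_Δ]
  rw [← r.eq]
  simp [map_sum]

/-- Comultiplication of the tensor square through arbitrary `Repr`s. -/
lemma cC_Δ_tmul {x y : H} {ιrx : Type*} (rx : Coalgebra.Repr R x ιrx) {ιry : Type*} (ry : Coalgebra.Repr R y ιry) :
    ((cH hc).tensor (cH hc)).Δ (x ⊗ₜ[R] y)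
      = ∑ i ∈ rx.index, ∑ j ∈ ry.index,
          (rx.left i ⊗ₜ[R] ry.left j) ⊗ₜ[R] (rx.right i ⊗ₜ[R] ry.right j) := by
  simp only [CoData.tensor_Δ, coTensorΔ, comp_apply, LinearEquiv.coe_coe,
    TensorProduct.map_tmul, cH_Δ]
  rw [← rx.eq, ← ry.eq, sum_tmul_sum]
  simp [map_sum]

/-- Evaluation of a convolution on `H ⊗ H` through arbitrary `Repr`s. -/
lemma conv_tensor_repr {A : Type*} [AddCommGroup A] [Module R A] (a : AlgData R A)
    (f g : H ⊗[R] H →ₗ[R] A) {x y : H} {ιrx : Type*} (rx : Coalgebra.Repr R x ιrx) {ιry : Type*} (ry : Coalgebra.Repr R y ιry) :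
    conv ((cH hc).tensor (cH hc)) a f g (x ⊗ₜ[R] y)
      = ∑ i ∈ rx.index, ∑ j ∈ ry.index,
          a.m (f (rx.left i ⊗ₜ[R] ry.left j) ⊗ₜ[R] g (rx.right i ⊗ₜ[R] ry.right j)) := by
  simp only [conv, comp_apply]
  rw [cC_Δ_tmul hc rx ry]
  simp [map_sum]

variable (Br : HopfBrace R H)

/-- The four antipode axioms, in convolution form. -/
lemma conv_S_id : conv (cH hc) (algOf Br.dot) Br.dot.S LinearMap.id
    = cunit (cH hc) (algOf Br.dot) := by
  apply LinearMap.ext; intro x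
  rw [conv_repr hc _ _ _ (reprULift (ℛ R x))]
  have hax := Br.dot.S_mul_left x (reprULift (ℛ R x))
  simpa [cunit] using hax

lemma conv_id_S : conv (cH hc) (algOf Br.dot) LinearMap.id Br.dot.S
    = cunit (cH hc) (algOf Br.dot) := by
  apply LinearMap.ext; intro x
  rw [conv_repr hc _ _ _ (reprULift (ℛ R x))]
  have hax := Br.dot.S_mul_right x (reprULift (ℛ R x))
  simpa [cunit] using hax

lemma conv_T_id : conv (cH hc) (algOf Br.circ) Br.circ.S LinearMap.id
    = cunit (cH hc) (algOf Br.circ) := by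
  apply LinearMap.ext; intro x
  rw [conv_repr hc _ _ _ (reprULift (ℛ R x))]
  have hax := Br.circ.S_mul_left x (reprULift (ℛ R x))
  simpa [cunit] using hax

lemma conv_id_T : conv (cH hc) (algOf Br.circ) LinearMap.id Br.circ.S
    = cunit (cH hc) (algOf Br.circ) := by
  apply LinearMap.ext; intro x
  rw [conv_repr hc _ _ _ (reprULift (ℛ R x))]
  have hax := Br.circ.S_mul_right x (reprULift (ℛ R x))
  simpa [cunit] using hax

/-- Bialgebra data of a `HopfMul`. -/
noncomputable def biOf (P : HopfMul R H) : BiData R H where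
  alg := algOf P
  co := cH hc
  Δm := by
    apply TensorProduct.ext'
    intro a b
    simp only [comp_apply, algOf_m_tmul, TensorProduct.map_tmul, cH_Δ]
    have aux : ∀ {ιa ιb : Type _} (ra : Coalgebra.Repr R a ιa) (rb : Coalgebra.Repr R b ιb),
        Coalgebra.comul (R := R) (P.mul a b) = ∑ i ∈ ra.index, ∑ j ∈ rb.index,
            P.mul (ra.left i) (rb.left j) ⊗ₜ[R] P.mul (ra.right i) (rb.right j) →
        Coalgebra.comul (R := R) (P.mul a b)
          = ((algOf P).tensor (algOf P)).m
              (TensorProduct.map Coalgebra.comul Coalgebra.comul (a ⊗ₜ[R] b)) := by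
      intro _ _ ra rb key
      rw [key]
      simp only [TensorProduct.map_tmul]
      rw [← ra.eq, ← rb.eq, sum_tmul_sum]
      simp [AlgData.tensor, map_sum]
    exact aux (reprULift (ℛ R a)) (reprULift (ℛ R b))
      (P.comul_mul a b (reprULift (ℛ R a)) (reprULift (ℛ R b)))
  εm := by
    apply TensorProduct.ext'
    intro a b
    simp only [comp_apply, algOf_m_tmul, TensorProduct.map_tmul, cH_ε,
      LinearMap.mul'_apply]
    exact P.counit_mul a b
  Δe := P.comul_one
  εe := P.counit_one

universe v in
/-- A grouplike representation. -/
noncomputable def grouplikeRepr (o : H) (h : Coalgebra.comul (R := R) o = o ⊗ₜ[R] o) :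
    Coalgebra.Repr R o PUnit.{v+1} where
  index := {PUnit.unit}
  left := fun _ => o
  right := fun _ => o
  eq := by simp [h]

lemma one_eq : Br.dot.one = Br.circ.one := by
  have h1 : ∀ h : H, h = Br.dot.mul h (Br.dot.S Br.circ.one) := by
    intro h
    have key := Br.compat Br.circ.one h Br.dot.one
      (grouplikeRepr Br.circ.one Br.circ.comul_one)
      (fun _ => grouplikeRepr Br.circ.one Br.circ.comul_one)
    simpa [grouplikeRepr, Br.circ.one_mul, Br.dot.mul_one] using key
  have h2 : Br.dot.S Br.circ.one = Br.dot.one := by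
    have := h1 Br.dot.one
    rw [Br.dot.one_mul] at this
    exact this.symm
  have h3 := Br.dot.S_mul_left Br.circ.one (grouplikeRepr Br.circ.one Br.circ.comul_one)
  simp only [grouplikeRepr, Finset.sum_singleton, Br.circ.counit_one, one_smul, h2,
    Br.dot.one_mul] at h3
  exact h3.symm

lemma T_one : Br.circ.S Br.circ.one = Br.circ.one := by
  have h3 := Br.circ.S_mul_left Br.circ.one (grouplikeRepr Br.circ.one Br.circ.comul_one)
  simpa [grouplikeRepr, Br.circ.counit_one, Br.circ.mul_one] using h3

/-- Right multiplication by `z` in the circle product. -/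
noncomputable def mcz (z : H) : H →ₗ[R] H := Br.circ.mul.flip z

@[simp] lemma mcz_apply (z g : H) : mcz Br z g = Br.circ.mul g z := rfl

lemma mcz_one : mcz Br Br.circ.one = LinearMap.id := by
  apply LinearMap.ext; intro g
  simp [Br.circ.mul_one]

/-- The map `g ↦ (g ⇀ z) = S(g₁)·(g₂∘z)`. -/
noncomputable def Az (z : H) : H →ₗ[R] H :=
  conv (cH hc) (algOf Br.dot) Br.dot.S (mcz Br z)

lemma Az_sum {ι : Type*} (s : Finset ι) (t : ι → H) :
    Az hc Br (∑ j ∈ s, t j) = ∑ j ∈ s, Az hc Br (t j) := by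
  rw [Az, show mcz Br (∑ j ∈ s, t j) = ∑ j ∈ s, mcz Br (t j) from map_sum _ _ _,
    conv_sum_right]
  rfl

/-- The map `g ⊗ h ↦ ε(h) g`. -/
noncomputable def Pmap : H ⊗[R] H →ₗ[R] H :=
  (TensorProduct.rid R H).toLinearMap ∘ₗ (LinearMap.lTensor H (Coalgebra.counit (R := R)))

@[simp] lemma Pmap_tmul (g h : H) :
    Pmap (R := R) (H := H) (g ⊗ₜ[R] h) = Coalgebra.counit (R := R) h • g := by
  simp [Pmap]

/-- The action map `g ⊗ h ↦ g ⇀ h`. -/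
noncomputable def Amap : H ⊗[R] H →ₗ[R] H :=
  conv ((cH hc).tensor (cH hc)) (algOf Br.dot) (Br.dot.S ∘ₗ Pmap) (algOf Br.circ).m

/-- The right action map `a ⊗ x ↦ a ↼ x`. -/
noncomputable def Rmap : H ⊗[R] H →ₗ[R] H :=
  conv ((cH hc).tensor (cH hc)) (algOf Br.circ) (Br.circ.S ∘ₗ Amap hc Br) (algOf Br.circ).m

lemma Amap_tmul (g h : H) : Amap hc Br (g ⊗ₜ[R] h) = Az hc Br h g := by
  rw [Amap, conv_tensor_repr hc _ _ _ (ℛ R g) (ℛ R h), Az, conv_repr hc _ _ _ (ℛ R g)]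
  refine Finset.sum_congr rfl fun i _ => ?_
  set L : H →ₗ[R] H := (algOf Br.dot).m ∘ₗ
      TensorProduct.mk R H H (Br.dot.S ((ℛ R g).left i)) ∘ₗ Br.circ.mul ((ℛ R g).right i)
    with hL
  calc ∑ j ∈ (ℛ R h).index,
        (algOf Br.dot).m ((Br.dot.S ∘ₗ Pmap) ((ℛ R g).left i ⊗ₜ[R] (ℛ R h).left j) ⊗ₜ[R]
          (algOf Br.circ).m ((ℛ R g).right i ⊗ₜ[R] (ℛ R h).right j))
      = ∑ j ∈ (ℛ R h).index,
          Coalgebra.counit (R := R) ((ℛ R h).left j) • L ((ℛ R h).right j) := by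
        refine Finset.sum_congr rfl fun j _ => ?_
        simp [hL, TensorProduct.smul_tmul', map_smul]
    _ = L (∑ j ∈ (ℛ R h).index,
          Coalgebra.counit (R := R) ((ℛ R h).left j) • (ℛ R h).right j) := by
        rw [map_sum]
        exact Finset.sum_congr rfl fun j _ => (map_smul L _ _).symm
    _ = L h := by rw [repr_counit_smul]
    _ = (algOf Br.dot).m (Br.dot.S ((ℛ R g).left i) ⊗ₜ[R] mcz Br h ((ℛ R g).right i)) := by
        simp [hL]

/-- Compatibility (the Hopf brace axiom) in convolution form. -/
lemma X3 (h ℓ : H) : mcz Br (Br.dot.mul h ℓ)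
    = conv (cH hc) (algOf Br.dot) (mcz Br h)
        (conv (cH hc) (algOf Br.dot) Br.dot.S (mcz Br ℓ)) := by
  apply LinearMap.ext; intro g
  have aux : ∀ {ι : Type _} (r : Coalgebra.Repr R g ι) {κ : r.ι → Type _}
        (r2 : ∀ i : r.ι, Coalgebra.Repr R (r.right i) (κ i)),
      Br.circ.mul g (Br.dot.mul h ℓ) = ∑ i ∈ r.index, ∑ j ∈ (r2 i).index,
        Br.dot.mul (Br.dot.mul (Br.circ.mul (r.left i) h) (Br.dot.S ((r2 i).left j)))
          (Br.circ.mul ((r2 i).right j) ℓ) →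
      (mcz Br (Br.dot.mul h ℓ)) g
        = conv (cH hc) (algOf Br.dot) (mcz Br h)
            (conv (cH hc) (algOf Br.dot) Br.dot.S (mcz Br ℓ)) g := by
    intro _ r _ r2 key
    rw [mcz_apply, key, conv_repr hc _ _ _ r]
    refine Finset.sum_congr rfl fun i _ => ?_
    rw [conv_repr hc _ _ _ (r2 i), TensorProduct.tmul_sum, map_sum]
    refine Finset.sum_congr rfl fun j _ => ?_
    simp [Br.dot.mul_assoc]
  exact aux (reprULift (ℛ R g)) (fun i => reprULift (ℛ R _)) (Br.compat g h ℓ _ _)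

lemma C1 (z : H) :
    conv (cH hc) (algOf Br.dot) LinearMap.id (Az hc Br z) = mcz Br z := by
  rw [Az, ← conv_assoc, conv_id_S, conv_cunit_left]

lemma C2 (u v : H) : Az hc Br (Br.dot.mul u v)
    = conv (cH hc) (algOf Br.dot) (Az hc Br u) (Az hc Br v) := by
  rw [Az, X3 hc Br u v, ← conv_assoc]
  rfl

lemma Az_one : Az hc Br Br.circ.one = cunit (cH hc) (algOf Br.dot) := by
  rw [Az, mcz_one]
  exact conv_S_id hc Br

lemma isCM_S : IsCM (cH hc) (cH hc) Br.dot.S :=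
  antipode_isCM (biOf hc Br.dot) (conv_S_id hc Br) (conv_id_S hc Br)

lemma isCM_T : IsCM (cH hc) (cH hc) Br.circ.S :=
  antipode_isCM (biOf hc Br.circ) (conv_T_id hc Br) (conv_id_T hc Br)

lemma isCM_W : IsCM ((cH hc).tensor (cH hc)) (cH hc) (algOf Br.circ).m :=
  (biOf hc Br.circ).m_isCM

lemma isCM_Wd : IsCM ((cH hc).tensor (cH hc)) (cH hc) (algOf Br.dot).m :=
  (biOf hc Br.dot).m_isCM

lemma isCM_P : IsCM ((cH hc).tensor (cH hc)) (cH hc) (Pmap (R := R) (H := H)) := by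
  constructor
  · apply TensorProduct.ext'
    intro g h
    simp only [comp_apply, Pmap_tmul, cH_Δ, map_smul]
    rw [cC_Δ_tmul hc (ℛ R g) (ℛ R h)]
    symm
    calc TensorProduct.map Pmap Pmap (∑ i ∈ (ℛ R g).index, ∑ j ∈ (ℛ R h).index,
          ((ℛ R g).left i ⊗ₜ[R] (ℛ R h).left j) ⊗ₜ[R] ((ℛ R g).right i ⊗ₜ[R] (ℛ R h).right j))
        = ∑ i ∈ (ℛ R g).index, ∑ j ∈ (ℛ R h).index,
            (Coalgebra.counit (R := R) ((ℛ R h).left j) *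
              Coalgebra.counit (R := R) ((ℛ R h).right j)) •
              ((ℛ R g).left i ⊗ₜ[R] (ℛ R g).right i) := by
          rw [map_sum]
          refine Finset.sum_congr rfl fun i _ => ?_
          rw [map_sum]
          refine Finset.sum_congr rfl fun j _ => ?_
          simp [mul_smul_tmul]
      _ = ∑ j ∈ (ℛ R h).index,
            (Coalgebra.counit (R := R) ((ℛ R h).left j) *
              Coalgebra.counit (R := R) ((ℛ R h).right j)) •
            ∑ i ∈ (ℛ R g).index, ((ℛ R g).left i ⊗ₜ[R] (ℛ R g).right i) := by
          rw [Finset.sum_comm]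
          exact Finset.sum_congr rfl fun j _ => (Finset.smul_sum).symm
      _ = Coalgebra.counit (R := R) h • Coalgebra.comul (R := R) g := by
          rw [← Finset.sum_smul, repr_counit_mul (ℛ R h), (ℛ R g).eq]
  · apply TensorProduct.ext'
    intro g h
    simp only [comp_apply, Pmap_tmul, cH_ε, map_smul, CoData.tensor_ε_tmul, cH_ε,
      smul_eq_mul]
    rw [mul_comm]

lemma isCM_A : IsCM ((cH hc).tensor (cH hc)) (cH hc) (Amap hc Br) :=
  conv_isCM _ (biOf hc Br.dot) (IsCM.comp (isCM_P hc) (isCM_S hc Br)) (isCM_W hc Br)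

lemma isCM_Rm : IsCM ((cH hc).tensor (cH hc)) (cH hc) (Rmap hc Br) :=
  conv_isCM _ (biOf hc Br.circ) (IsCM.comp (isCM_A hc Br) (isCM_T hc Br)) (isCM_W hc Br)

/-- The identity `g ∘ z = g₁ · (g₂ ⇀ z)` in map form. -/
lemma C1map : (algOf Br.circ).m
    = (algOf Br.dot).m ∘ₗ LinearMap.lTensor H (Amap hc Br) ∘ₗ
        (TensorProduct.assoc R H H H).toLinearMap ∘ₗ
        (Coalgebra.comul (R := R)).rTensor H := by
  apply TensorProduct.ext'
  intro g z
  simp only [comp_apply, rTensor_tmul, LinearEquiv.coe_coe]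
  rw [← (ℛ R g).eq, TensorProduct.sum_tmul, map_sum, map_sum, map_sum]
  calc (algOf Br.circ).m (g ⊗ₜ[R] z)
      = conv (cH hc) (algOf Br.dot) LinearMap.id (Az hc Br z) g := by
        rw [C1]; simp
    _ = ∑ i ∈ (ℛ R g).index,
          (algOf Br.dot).m ((ℛ R g).left i ⊗ₜ[R] Az hc Br z ((ℛ R g).right i)) := by
        rw [conv_repr hc _ _ _ (ℛ R g)]
        rfl
    _ = ∑ i ∈ (ℛ R g).index, (algOf Br.dot).m
          (LinearMap.lTensor H (Amap hc Br)
            (TensorProduct.assoc R H H H (((ℛ R g).left i ⊗ₜ[R] (ℛ R g).right i) ⊗ₜ[R] z))) := by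
        refine Finset.sum_congr rfl fun i _ => ?_
        simp [Amap_tmul]

/-- Rewriting a circle-convolution as a dot-convolution. -/
lemma conv_cd {C : Type*} [AddCommGroup C] [Module R C] (c : CoData R C)
    (f g : C →ₗ[R] H) (hf : IsCM c (cH hc) f) :
    conv c (algOf Br.circ) f g
      = conv c (algOf Br.dot) f (Amap hc Br ∘ₗ TensorProduct.map f g ∘ₗ c.Δ) := by
  apply LinearMap.ext; intro x
  have h0 := LinearMap.congr_fun (C1map hc Br) (TensorProduct.map f g (c.Δ x))
  have e1 : (Coalgebra.comul (R := R)).rTensor H ∘ₗ TensorProduct.map f g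
      = TensorProduct.map (TensorProduct.map f f) g ∘ₗ c.Δ.rTensor C := by
    rw [rTensor, rTensor, ← TensorProduct.map_comp, ← TensorProduct.map_comp]
    rw [show Coalgebra.comul (R := R) ∘ₗ f = TensorProduct.map f f ∘ₗ c.Δ from hf.1]
    simp
  have h1 := LinearMap.congr_fun e1 (c.Δ x)
  have h2 := TensorProduct.map_map_assoc f f g ((c.Δ.rTensor C) (c.Δ x))
  have h3 := LinearMap.congr_fun c.coassoc x
  have e4 : LinearMap.lTensor H (Amap hc Br) ∘ₗ
        TensorProduct.map f (TensorProduct.map f g) ∘ₗ c.Δ.lTensor C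
      = TensorProduct.map f (Amap hc Br ∘ₗ TensorProduct.map f g ∘ₗ c.Δ) := by
    rw [lTensor, lTensor, ← TensorProduct.map_comp, ← TensorProduct.map_comp]
    simp
  have h4 := LinearMap.congr_fun e4 (c.Δ x)
  simp only [conv, comp_apply, LinearEquiv.coe_coe] at h0 h1 h2 h3 h4 ⊢
  rw [h0, h1, ← h2, h3, h4]

lemma sum_S_mul_eq (P : HopfMul R H) (u : H) {ιr' : Type*} (r' : Coalgebra.Repr R u ιr') :
    ∑ i ∈ r'.index, P.mul (P.S (r'.left i)) (r'.right i)
      = ((algOf P).m ∘ₗ TensorProduct.map P.S LinearMap.id) (Coalgebra.comul (R := R) u) := by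
  rw [← r'.eq]
  simp [map_sum]

lemma sum_mul_S_eq (P : HopfMul R H) (u : H) {ιr' : Type*} (r' : Coalgebra.Repr R u ιr') :
    ∑ i ∈ r'.index, P.mul (r'.left i) (P.S (r'.right i))
      = ((algOf P).m ∘ₗ TensorProduct.map LinearMap.id P.S) (Coalgebra.comul (R := R) u) := by
  rw [← r'.eq]
  simp [map_sum]

/-- The antipode axioms for arbitrary representations (universe-free). -/
lemma S_mul_left' (P : HopfMul R H) (u : H) {ιr : Type*} (r : Coalgebra.Repr R u ιr) :
    ∑ i ∈ r.index, P.mul (P.S (r.left i)) (r.right i)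
      = Coalgebra.counit (R := R) u • P.one := by
  have h := P.S_mul_left u (reprULift (ℛ R u))
  rw [sum_S_mul_eq P u _] at h
  rw [sum_S_mul_eq P u r]
  exact h

lemma S_mul_right' (P : HopfMul R H) (u : H) {ιr : Type*} (r : Coalgebra.Repr R u ιr) :
    ∑ i ∈ r.index, P.mul (r.left i) (P.S (r.right i))
      = Coalgebra.counit (R := R) u • P.one := by
  have h := P.S_mul_right u (reprULift (ℛ R u))
  rw [sum_mul_S_eq P u _] at h
  rw [sum_mul_S_eq P u r]
  exact h

/-- The action identity `(g∘h) ⇀ z = g ⇀ (h ⇀ z)` in map form. -/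
lemma C5 (z : H) : Az hc Br z ∘ₗ (algOf Br.circ).m
    = Amap hc Br ∘ₗ LinearMap.lTensor H (Az hc Br z) := by
  have hQ : conv ((cH hc).tensor (cH hc)) (algOf Br.dot)
      (Br.dot.S ∘ₗ (algOf Br.circ).m) ((algOf Br.circ).m)
      = cunit ((cH hc).tensor (cH hc)) (algOf Br.dot) := by
    have h := conv_precomp ((cH hc).tensor (cH hc)) (cH hc) (algOf Br.dot)
      (isCM_W hc Br) Br.dot.S LinearMap.id
    rw [conv_S_id, cunit_precomp _ _ _ (isCM_W hc Br)] at h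
    simpa using h.symm
  have hPF : conv ((cH hc).tensor (cH hc)) (algOf Br.dot)
      ((algOf Br.circ).m) (Az hc Br z ∘ₗ (algOf Br.circ).m)
      = mcz Br z ∘ₗ (algOf Br.circ).m := by
    have h := conv_precomp ((cH hc).tensor (cH hc)) (cH hc) (algOf Br.dot)
      (isCM_W hc Br) LinearMap.id (Az hc Br z)
    rw [C1] at h
    simpa using h.symm
  have hPG : conv ((cH hc).tensor (cH hc)) (algOf Br.dot)
      ((algOf Br.circ).m) (Amap hc Br ∘ₗ LinearMap.lTensor H (Az hc Br z))
      = mcz Br z ∘ₗ (algOf Br.circ).m := by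
    apply TensorProduct.ext'
    intro g h
    rw [conv_tensor_repr hc _ _ _ (ℛ R g) (ℛ R h)]
    rw [Finset.sum_comm]
    calc ∑ j ∈ (ℛ R h).index, ∑ i ∈ (ℛ R g).index,
          (algOf Br.dot).m ((algOf Br.circ).m ((ℛ R g).left i ⊗ₜ[R] (ℛ R h).left j) ⊗ₜ[R]
            (Amap hc Br ∘ₗ LinearMap.lTensor H (Az hc Br z))
              ((ℛ R g).right i ⊗ₜ[R] (ℛ R h).right j))
        = ∑ j ∈ (ℛ R h).index,
            conv (cH hc) (algOf Br.dot) (mcz Br ((ℛ R h).left j))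
              (conv (cH hc) (algOf Br.dot) Br.dot.S
                (mcz Br (Az hc Br z ((ℛ R h).right j)))) g := by
          refine Finset.sum_congr rfl fun j _ => ?_
          rw [conv_repr hc _ _ _ (ℛ R g)]
          refine Finset.sum_congr rfl fun i _ => ?_
          simp [Amap_tmul, Az, mcz_apply]
      _ = ∑ j ∈ (ℛ R h).index,
            mcz Br (Br.dot.mul ((ℛ R h).left j) (Az hc Br z ((ℛ R h).right j))) g := by
          refine Finset.sum_congr rfl fun j _ => ?_
          rw [← X3]
      _ = Br.circ.mul g (∑ j ∈ (ℛ R h).index,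
            Br.dot.mul ((ℛ R h).left j) (Az hc Br z ((ℛ R h).right j))) := by
          rw [map_sum]
          rfl
      _ = Br.circ.mul g (Br.circ.mul h z) := by
          congr 1
          have := conv_repr hc (algOf Br.dot) LinearMap.id (Az hc Br z) (ℛ R h)
          rw [C1] at this
          simpa using this.symm
      _ = (mcz Br z ∘ₗ (algOf Br.circ).m) (g ⊗ₜ[R] h) := by
          simp [← Br.circ.mul_assoc]
  exact conv_cancel_left _ _ hQ (hPF.trans hPG.symm)

include hc in
/-- The antipode `T` is an anti-homomorphism (in map form). -/
lemma Tanti : (algOf Br.circ).m ∘ₗ TensorProduct.map Br.circ.S Br.circ.S ∘ₗ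
      (TensorProduct.comm R H H).toLinearMap
    = Br.circ.S ∘ₗ (algOf Br.circ).m := by
  have hR : conv ((cH hc).tensor (cH hc)) (algOf Br.circ)
      ((algOf Br.circ).m) (Br.circ.S ∘ₗ (algOf Br.circ).m)
      = cunit ((cH hc).tensor (cH hc)) (algOf Br.circ) := by
    have h := conv_precomp ((cH hc).tensor (cH hc)) (cH hc) (algOf Br.circ)
      (isCM_W hc Br) LinearMap.id Br.circ.S
    rw [conv_id_T, cunit_precomp _ _ _ (isCM_W hc Br)] at h
    simpa using h.symm
  have hL : conv ((cH hc).tensor (cH hc)) (algOf Br.circ)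
      ((algOf Br.circ).m ∘ₗ TensorProduct.map Br.circ.S Br.circ.S ∘ₗ
        (TensorProduct.comm R H H).toLinearMap) ((algOf Br.circ).m)
      = cunit ((cH hc).tensor (cH hc)) (algOf Br.circ) := by
    apply TensorProduct.ext'
    intro u v
    rw [conv_tensor_repr hc _ _ _ (ℛ R u) (ℛ R v)]
    rw [Finset.sum_comm]
    calc ∑ j ∈ (ℛ R v).index, ∑ i ∈ (ℛ R u).index,
          (algOf Br.circ).m
            (((algOf Br.circ).m ∘ₗ TensorProduct.map Br.circ.S Br.circ.S ∘ₗ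
              (TensorProduct.comm R H H).toLinearMap)
                ((ℛ R u).left i ⊗ₜ[R] (ℛ R v).left j) ⊗ₜ[R]
              (algOf Br.circ).m ((ℛ R u).right i ⊗ₜ[R] (ℛ R v).right j))
        = ∑ j ∈ (ℛ R v).index, ∑ i ∈ (ℛ R u).index,
            (Br.circ.mul (Br.circ.S ((ℛ R v).left j)) ∘ₗ mcz Br ((ℛ R v).right j))
              (Br.circ.mul (Br.circ.S ((ℛ R u).left i)) ((ℛ R u).right i)) := by
          refine Finset.sum_congr rfl fun j _ => Finset.sum_congr rfl fun i _ => ?_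
          simp [Br.circ.mul_assoc]
      _ = ∑ j ∈ (ℛ R v).index,
            (Br.circ.mul (Br.circ.S ((ℛ R v).left j)) ∘ₗ mcz Br ((ℛ R v).right j))
              (Coalgebra.counit (R := R) u • Br.circ.one) := by
          refine Finset.sum_congr rfl fun j _ => ?_
          rw [← map_sum, S_mul_left' Br.circ u (ℛ R u)]
      _ = Coalgebra.counit (R := R) u •
            ∑ j ∈ (ℛ R v).index, Br.circ.mul (Br.circ.S ((ℛ R v).left j)) ((ℛ R v).right j) := by
          rw [Finset.smul_sum]
          refine Finset.sum_congr rfl fun j _ => ?_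
          rw [map_smul]
          simp [Br.circ.one_mul]
      _ = cunit ((cH hc).tensor (cH hc)) (algOf Br.circ) (u ⊗ₜ[R] v) := by
          rw [S_mul_left' Br.circ v (ℛ R v)]
          simp [cunit, smul_smul]
  exact conv_inv_unique _ _ hL hR

include hc in
/-- Convolution with `T` composed on both arguments reverses the order. -/
lemma conv_T_swap {C : Type*} [AddCommGroup C] [Module R C] (c : CoData R C)
    (p q : C →ₗ[R] H) :
    conv c (algOf Br.circ) (Br.circ.S ∘ₗ p) (Br.circ.S ∘ₗ q)
      = Br.circ.S ∘ₗ conv c (algOf Br.circ) q p := by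
  apply LinearMap.ext; intro x
  have h1 := LinearMap.congr_fun c.cocomm x
  have h2 := TensorProduct.map_comm p q (c.Δ x)
  have h3 := LinearMap.congr_fun (Tanti hc Br) (TensorProduct.map q p (c.Δ x))
  have e : TensorProduct.map (Br.circ.S ∘ₗ p) (Br.circ.S ∘ₗ q)
      = TensorProduct.map Br.circ.S Br.circ.S ∘ₗ TensorProduct.map p q :=
    TensorProduct.map_comp _ _ _ _
  have h4 := LinearMap.congr_fun e (c.Δ x)
  simp only [conv, comp_apply, LinearEquiv.coe_coe] at h1 h2 h3 h4 ⊢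
  rw [h4, ← h1, h2, h3, h1]

/-- Post-composition with right circle-multiplication. -/
lemma mcz_post {C : Type*} [AddCommGroup C] [Module R C] (c : CoData R C)
    (z : H) (p q : C →ₗ[R] H) :
    mcz Br z ∘ₗ conv c (algOf Br.circ) p q
      = conv c (algOf Br.circ) p (mcz Br z ∘ₗ q) := by
  have e : mcz Br z ∘ₗ (algOf Br.circ).m
      = (algOf Br.circ).m ∘ₗ LinearMap.lTensor H (mcz Br z) := by
    apply TensorProduct.ext'
    intro a b
    simp [Br.circ.mul_assoc]
  apply LinearMap.ext; intro x
  have h1 := LinearMap.congr_fun e (TensorProduct.map p q (c.Δ x))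
  have e2 : LinearMap.lTensor H (mcz Br z) ∘ₗ TensorProduct.map p q
      = TensorProduct.map p (mcz Br z ∘ₗ q) := by
    rw [lTensor, ← TensorProduct.map_comp]
    simp
  have h2 := LinearMap.congr_fun e2 (c.Δ x)
  simp only [conv, comp_apply] at h1 h2 ⊢
  rw [h1, h2]

/-- The matched-pair identity (M). -/
lemma Mlem (y : H) :
    conv ((cH hc).tensor (cH hc)) (algOf Br.circ) (Amap hc Br) (Az hc Br y ∘ₗ Rmap hc Br)
      = Amap hc Br ∘ₗ LinearMap.lTensor H (mcz Br y) := by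
  have s4 : conv ((cH hc).tensor (cH hc)) (algOf Br.circ) (Amap hc Br) (Rmap hc Br)
      = (algOf Br.circ).m := by
    rw [Rmap, ← conv_assoc]
    have h : conv ((cH hc).tensor (cH hc)) (algOf Br.circ) (Amap hc Br)
        (Br.circ.S ∘ₗ Amap hc Br) = cunit ((cH hc).tensor (cH hc)) (algOf Br.circ) := by
      have h2 := conv_precomp ((cH hc).tensor (cH hc)) (cH hc) (algOf Br.circ)
        (isCM_A hc Br) LinearMap.id Br.circ.S
      rw [conv_id_T, cunit_precomp _ _ _ (isCM_A hc Br)] at h2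
      simpa using h2.symm
    rw [h, conv_cunit_left]
  have s3 : Amap hc Br ∘ₗ
        TensorProduct.map (Amap hc Br) (Az hc Br y ∘ₗ Rmap hc Br) ∘ₗ
        ((cH hc).tensor (cH hc)).Δ
      = Az hc Br y ∘ₗ conv ((cH hc).tensor (cH hc)) (algOf Br.circ) (Amap hc Br)
          (Rmap hc Br) := by
    have e : TensorProduct.map (Amap hc Br) (Az hc Br y ∘ₗ Rmap hc Br)
        = LinearMap.lTensor H (Az hc Br y) ∘ₗ TensorProduct.map (Amap hc Br) (Rmap hc Br) := by
      rw [lTensor, ← TensorProduct.map_comp]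
      simp
    apply LinearMap.ext; intro x
    have h1 := LinearMap.congr_fun e (((cH hc).tensor (cH hc)).Δ x)
    have h2 := LinearMap.congr_fun (C5 hc Br y)
      (TensorProduct.map (Amap hc Br) (Rmap hc Br) (((cH hc).tensor (cH hc)).Δ x))
    simp only [conv, comp_apply] at h1 h2 ⊢
    rw [h1, ← h2]
  rw [conv_cd hc Br _ _ _ (isCM_A hc Br), s3, s4]
  -- now : conv cC aD Amap (Az y ∘ₗ (algOf circ).m) = Amap ∘ₗ lTensor (mcz y)
  rw [C5 hc Br y]
  -- goal : conv cC aD Amap (Amap ∘ₗ lTensor (Az y)) = Amap ∘ₗ lTensor (mcz y)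
  apply TensorProduct.ext'
  intro a x
  rw [conv_tensor_repr hc _ _ _ (ℛ R a) (ℛ R x)]
  rw [Finset.sum_comm]
  calc ∑ j ∈ (ℛ R x).index, ∑ i ∈ (ℛ R a).index,
        (algOf Br.dot).m (Amap hc Br ((ℛ R a).left i ⊗ₜ[R] (ℛ R x).left j) ⊗ₜ[R]
          (Amap hc Br ∘ₗ LinearMap.lTensor H (Az hc Br y))
            ((ℛ R a).right i ⊗ₜ[R] (ℛ R x).right j))
      = ∑ j ∈ (ℛ R x).index,
          conv (cH hc) (algOf Br.dot) (Az hc Br ((ℛ R x).left j))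
            (Az hc Br (Az hc Br y ((ℛ R x).right j))) a := by
        refine Finset.sum_congr rfl fun j _ => ?_
        rw [conv_repr hc _ _ _ (ℛ R a)]
        refine Finset.sum_congr rfl fun i _ => ?_
        simp [Amap_tmul]
    _ = ∑ j ∈ (ℛ R x).index,
          Az hc Br (Br.dot.mul ((ℛ R x).left j) (Az hc Br y ((ℛ R x).right j))) a := by
        refine Finset.sum_congr rfl fun j _ => ?_
        rw [C2]
    _ = Az hc Br (∑ j ∈ (ℛ R x).index,
          Br.dot.mul ((ℛ R x).left j) (Az hc Br y ((ℛ R x).right j))) a := by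
        rw [Az_sum]
        simp
    _ = Az hc Br (Br.circ.mul x y) a := by
        congr 2
        have := conv_repr hc (algOf Br.dot) LinearMap.id (Az hc Br y) (ℛ R x)
        rw [C1] at this
        simpa using this.symm
    _ = (Amap hc Br ∘ₗ LinearMap.lTensor H (mcz Br y)) (a ⊗ₜ[R] x) := by
        simp [Amap_tmul]

/-- The map `a ↦ a ⊗ 1`. -/
noncomputable def rho1 : H →ₗ[R] H ⊗[R] H := (TensorProduct.mk R H H).flip Br.circ.one

@[simp] lemma rho1_apply (a : H) : rho1 Br a = a ⊗ₜ[R] Br.circ.one := rfl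

lemma isCM_rho1 : IsCM (cH hc) ((cH hc).tensor (cH hc)) (rho1 Br) := by
  constructor
  · apply LinearMap.ext; intro a
    simp only [comp_apply, rho1_apply, CoData.tensor_Δ, coTensorΔ, LinearEquiv.coe_coe,
      TensorProduct.map_tmul, cH_Δ, Br.circ.comul_one]
    rw [← (ℛ R a).eq, TensorProduct.sum_tmul, map_sum, map_sum]
    simp
  · apply LinearMap.ext; intro a
    simp [Br.circ.counit_one, CoData.tensor_ε_tmul]

lemma Rmap_one (a : H) : Rmap hc Br (a ⊗ₜ[R] Br.circ.one) = a := by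
  have hW : (algOf Br.circ).m ∘ₗ rho1 Br = LinearMap.id := by
    apply LinearMap.ext; intro b
    simp [Br.circ.mul_one]
  have hTA : (Br.circ.S ∘ₗ Amap hc Br) ∘ₗ rho1 Br = cunit (cH hc) (algOf Br.circ) := by
    apply LinearMap.ext; intro b
    simp only [comp_apply, rho1_apply, Amap_tmul, Az_one]
    simp only [cunit, LinearMap.smulRight_apply, map_smul, algOf_e]
    rw [one_eq Br, T_one Br]
  have h := conv_precomp (cH hc) ((cH hc).tensor (cH hc)) (algOf Br.circ)
    (isCM_rho1 hc Br) (Br.circ.S ∘ₗ Amap hc Br) ((algOf Br.circ).m)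
  rw [show conv ((cH hc).tensor (cH hc)) (algOf Br.circ)
      (Br.circ.S ∘ₗ Amap hc Br) ((algOf Br.circ).m) = Rmap hc Br from rfl] at h
  rw [hW, hTA, conv_cunit_left] at h
  exact LinearMap.congr_fun h a

include hc in
/-- Comultiplication of a product through arbitrary representations (universe-free). -/
lemma comul_mul_repr (P : HopfMul R H) (x y : H)
    {ιrx : Type*} (rx : Coalgebra.Repr R x ιrx) {ιry : Type*} (ry : Coalgebra.Repr R y ιry) :
    Coalgebra.comul (R := R) (P.mul x y)
      = ∑ k ∈ rx.index, ∑ j ∈ ry.index,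
          P.mul (rx.left k) (ry.left j) ⊗ₜ[R] P.mul (rx.right k) (ry.right j) := by
  have h := LinearMap.congr_fun (biOf hc P).Δm (x ⊗ₜ[R] y)
  simp only [biOf, comp_apply, TensorProduct.map_tmul, cH_Δ, algOf_m_tmul] at h
  rw [h, ← rx.eq, ← ry.eq, sum_tmul_sum, map_sum]
  refine Finset.sum_congr rfl fun k _ => ?_
  rw [map_sum]
  refine Finset.sum_congr rfl fun j _ => ?_
  simp [AlgData.tensor]

lemma claim1 (y : H) {ιry : Type*} (ry : Coalgebra.Repr R y ιry) (h : H) :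
    Rmap hc Br (h ⊗ₜ[R] y)
      = ∑ j ∈ ry.index, conv (cH hc) (algOf Br.circ)
          (Br.circ.S ∘ₗ Az hc Br (ry.left j)) (mcz Br (ry.right j)) h := by
  rw [Rmap, conv_tensor_repr hc _ _ _ (ℛ R h) ry, Finset.sum_comm]
  refine Finset.sum_congr rfl fun j _ => ?_
  rw [conv_repr hc _ _ _ (ℛ R h)]
  refine Finset.sum_congr rfl fun i _ => ?_
  simp [Amap_tmul]

lemma claim2 (p q : H) :
    conv ((cH hc).tensor (cH hc)) (algOf Br.circ)
        ((Br.circ.S ∘ₗ Az hc Br p) ∘ₗ Rmap hc Br) (mcz Br q ∘ₗ Rmap hc Br)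
      = conv ((cH hc).tensor (cH hc)) (algOf Br.circ)
          (Br.circ.S ∘ₗ Amap hc Br ∘ₗ LinearMap.lTensor H (mcz Br p))
          (mcz Br q ∘ₗ (algOf Br.circ).m) := by
  have e1 : mcz Br q ∘ₗ Rmap hc Br
      = conv ((cH hc).tensor (cH hc)) (algOf Br.circ)
          (Br.circ.S ∘ₗ Amap hc Br) (mcz Br q ∘ₗ (algOf Br.circ).m) := by
    rw [Rmap, mcz_post]
  rw [e1, ← conv_assoc]
  congr 1
  rw [LinearMap.comp_assoc, conv_T_swap hc Br _ (Az hc Br p ∘ₗ Rmap hc Br) (Amap hc Br),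
    Mlem hc Br p]

lemma claim3 (a x y : H) :
    Rmap hc Br (a ⊗ₜ[R] Br.circ.mul x y)
      = ∑ j ∈ (ℛ R y).index, conv ((cH hc).tensor (cH hc)) (algOf Br.circ)
          (Br.circ.S ∘ₗ Amap hc Br ∘ₗ LinearMap.lTensor H (mcz Br ((ℛ R y).left j)))
          (mcz Br ((ℛ R y).right j) ∘ₗ (algOf Br.circ).m) (a ⊗ₜ[R] x) := by
  have hΔ : ((cH hc).tensor (cH hc)).Δ (a ⊗ₜ[R] Br.circ.mul x y)
      = ∑ i ∈ (ℛ R a).index, ∑ k ∈ (ℛ R x).index, ∑ j ∈ (ℛ R y).index,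
          ((ℛ R a).left i ⊗ₜ[R] Br.circ.mul ((ℛ R x).left k) ((ℛ R y).left j)) ⊗ₜ[R]
            ((ℛ R a).right i ⊗ₜ[R] Br.circ.mul ((ℛ R x).right k) ((ℛ R y).right j)) := by
    simp only [CoData.tensor_Δ, coTensorΔ, comp_apply, TensorProduct.map_tmul,
      LinearEquiv.coe_coe, cH_Δ]
    rw [comul_mul_repr hc Br.circ x y (ℛ R x) (ℛ R y), ← (ℛ R a).eq, sum_tmul_sum]
    simp only [TensorProduct.tmul_sum, map_sum,
      TensorProduct.tensorTensorTensorComm_tmul]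
  calc Rmap hc Br (a ⊗ₜ[R] Br.circ.mul x y)
      = ∑ i ∈ (ℛ R a).index, ∑ k ∈ (ℛ R x).index, ∑ j ∈ (ℛ R y).index,
          (algOf Br.circ).m
            (Br.circ.S (Amap hc Br ((ℛ R a).left i ⊗ₜ[R]
                Br.circ.mul ((ℛ R x).left k) ((ℛ R y).left j))) ⊗ₜ[R]
              Br.circ.mul ((ℛ R a).right i)
                (Br.circ.mul ((ℛ R x).right k) ((ℛ R y).right j))) := by
        simp only [Rmap, conv, comp_apply]
        rw [hΔ]
        simp [map_sum]
    _ = ∑ j ∈ (ℛ R y).index, ∑ i ∈ (ℛ R a).index, ∑ k ∈ (ℛ R x).index,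
          (algOf Br.circ).m
            (Br.circ.S (Amap hc Br ((ℛ R a).left i ⊗ₜ[R]
                Br.circ.mul ((ℛ R x).left k) ((ℛ R y).left j))) ⊗ₜ[R]
              Br.circ.mul ((ℛ R a).right i)
                (Br.circ.mul ((ℛ R x).right k) ((ℛ R y).right j))) := sum_rot3 _ _ _ _
    _ = ∑ j ∈ (ℛ R y).index, conv ((cH hc).tensor (cH hc)) (algOf Br.circ)
          (Br.circ.S ∘ₗ Amap hc Br ∘ₗ LinearMap.lTensor H (mcz Br ((ℛ R y).left j)))
          (mcz Br ((ℛ R y).right j) ∘ₗ (algOf Br.circ).m) (a ⊗ₜ[R] x) := by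
        refine Finset.sum_congr rfl fun j _ => ?_
        rw [conv_tensor_repr hc _ _ _ (ℛ R a) (ℛ R x)]
        refine Finset.sum_congr rfl fun i _ => Finset.sum_congr rfl fun k _ => ?_
        simp [Br.circ.mul_assoc]

lemma G1 (a x y : H) :
    Rmap hc Br (Rmap hc Br (a ⊗ₜ[R] x) ⊗ₜ[R] y)
      = Rmap hc Br (a ⊗ₜ[R] Br.circ.mul x y) := by
  rw [claim1 hc Br y (ℛ R y) (Rmap hc Br (a ⊗ₜ[R] x)), claim3 hc Br a x y]
  refine Finset.sum_congr rfl fun j _ => ?_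
  have h := LinearMap.congr_fun (conv_precomp ((cH hc).tensor (cH hc)) (cH hc)
    (algOf Br.circ) (isCM_Rm hc Br)
    (Br.circ.S ∘ₗ Az hc Br ((ℛ R y).left j)) (mcz Br ((ℛ R y).right j))) (a ⊗ₜ[R] x)
  simp only [comp_apply] at h
  rw [h]
  rw [LinearMap.congr_fun (claim2 hc Br ((ℛ R y).left j) ((ℛ R y).right j)) (a ⊗ₜ[R] x)]

lemma G3 (a x : H) {ιra : Type*} (ra : Coalgebra.Repr R a ιra) {ιrx : Type*} (rx : Coalgebra.Repr R x ιrx) :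
    Coalgebra.comul (R := R) (Rmap hc Br (a ⊗ₜ[R] x))
      = ∑ i ∈ ra.index, ∑ j ∈ rx.index,
          Rmap hc Br (ra.left i ⊗ₜ[R] rx.left j) ⊗ₜ[R]
            Rmap hc Br (ra.right i ⊗ₜ[R] rx.right j) := by
  have h := LinearMap.congr_fun (isCM_Rm hc Br).1 (a ⊗ₜ[R] x)
  simp only [comp_apply, cH_Δ] at h
  rw [h, cC_Δ_tmul hc ra rx]
  simp [map_sum]

end Brace

end HBaux

/-- In a cocommutative Hopf brace, `a↼x := T(a₍₁₎⇀x₍₁₎)∘a₍₂₎∘x₍₂₎` is a right action of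
`(H,∘)` on `H` which is a coalgebra map. -/
theorem hopfBrace_right_action (Br : HopfBrace R H) (hc : Cocomm R H)
    (act ract : H → H → H)
    (hact : ∀ (g h : H) {ι : Type*} (r : Coalgebra.Repr R g ι),
      act g h = ∑ i ∈ r.index,
        Br.dot.mul (Br.dot.S (r.left i)) (Br.circ.mul (r.right i) h))
    (hract : ∀ (a x : H) {ι κ : Type*} (ra : Coalgebra.Repr R a ι) (rx : Coalgebra.Repr R x κ),
      ract a x = ∑ i ∈ ra.index, ∑ j ∈ rx.index,
        Br.circ.mul (Br.circ.mul (Br.circ.S (act (ra.left i) (rx.left j)))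
          (ra.right i)) (rx.right j)) :
    (∀ a x y : H, ract (ract a x) y = ract a (Br.circ.mul x y)) ∧
    (∀ a : H, ract a Br.circ.one = a) ∧
    (∀ (a x : H) {ι κ : Type*} (ra : Coalgebra.Repr R a ι) (rx : Coalgebra.Repr R x κ),
      comul (R := R) (ract a x) = ∑ i ∈ ra.index, ∑ j ∈ rx.index,
        ract (ra.left i) (rx.left j) ⊗ₜ[R] ract (ra.right i) (rx.right j)) := by
  have hA : ∀ g h : H, act g h = HBaux.Amap hc Br (g ⊗ₜ[R] h) := by
    intro g h
    have aux : ∀ {ι : Type _} (r : Coalgebra.Repr R g ι),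
        act g h = ∑ i ∈ r.index,
          Br.dot.mul (Br.dot.S (r.left i)) (Br.circ.mul (r.right i) h) →
        act g h = HBaux.Amap hc Br (g ⊗ₜ[R] h) := by
      intro _ r key
      rw [key, HBaux.Amap_tmul, HBaux.Az, HBaux.conv_repr hc _ _ _ r]
      refine Finset.sum_congr rfl fun i _ => ?_
      simp
    exact aux (HBaux.reprULift (ℛ R g)) (hact g h _)
  have hRt : ∀ a x : H, ract a x = HBaux.Rmap hc Br (a ⊗ₜ[R] x) := by
    intro a x
    have aux : ∀ {ιa ιx : Type _} (ra : Coalgebra.Repr R a ιa) (rx : Coalgebra.Repr R x ιx),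
        ract a x = ∑ i ∈ ra.index, ∑ j ∈ rx.index,
          Br.circ.mul (Br.circ.mul (Br.circ.S (act (ra.left i) (rx.left j)))
            (ra.right i)) (rx.right j) →
        ract a x = HBaux.Rmap hc Br (a ⊗ₜ[R] x) := by
      intro _ _ ra rx key
      rw [key, HBaux.Rmap, HBaux.conv_tensor_repr hc _ _ _ ra rx]
      refine Finset.sum_congr rfl fun i _ => Finset.sum_congr rfl fun j _ => ?_
      rw [hA]
      simp [Br.circ.mul_assoc]
    exact aux (HBaux.reprULift (ℛ R a)) (HBaux.reprULift (ℛ R x)) (hract a x _ _)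
  refine ⟨?_, ?_, ?_⟩
  · intro a x y
    rw [hRt (ract a x) y, hRt a x, hRt a (Br.circ.mul x y)]
    exact HBaux.G1 hc Br a x y
  · intro a
    rw [hRt a Br.circ.one]
    exact HBaux.Rmap_one hc Br a
  · intro a x _ _ ra rx
    rw [hRt a x, HBaux.G3 hc Br a x ra rx]
    refine Finset.sum_congr rfl fun i _ => Finset.sum_congr rfl fun j _ => ?_
    rw [hRt, hRt]
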